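/- arXiv:1207.1479 — 7 statements merged into one kernel-verified Lean document; each statement's English description precedes it below -/
import Mathlib

section
/- For a unit vector v in the tensor product C^m ⊗ C^n with Schmidt coefficients α_1 ≥ α_2 ≥ ... ≥ 0, the supremum of |⟨w|v⟩| over all unit vectors w of Schmidt rank at most k equals the square root of the sum of the squares of the k largest Schmidt coefficients of v. -/
open scoped BigOperators

noncomputable section

/-- Elementary tensor of two vectors. -/
def tens {m n : ℕ} (a : Fin m → ℂ) (b : Fin n → ℂ) : Fin m × Fin n → ℂ :=
  fun p => a p.1 * b p.2

/-- Inner product `⟨w|v⟩`, conjugate-linear in the first argument. -/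
def ip {ι : Type} [Fintype ι] (w v : ι → ℂ) : ℂ :=
  ∑ i, (starRingEnd ℂ) (w i) * v i

/-- Euclidean norm. -/
def nrm {ι : Type} [Fintype ι] (v : ι → ℂ) : ℝ :=
  Real.sqrt (∑ i, Complex.normSq (v i))

/-- Schmidt rank at most `k`: `v` is a sum of `k` elementary tensors. -/
def SRle {m n : ℕ} (k : ℕ) (v : Fin m × Fin n → ℂ) : Prop :=
  ∃ (a : Fin k → Fin m → ℂ) (b : Fin k → Fin n → ℂ),
    v = fun p => ∑ l, a l p.1 * b l p.2

/-- The `s(k)`-vector norm. -/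
def snorm {m n : ℕ} (k : ℕ) (v : Fin m × Fin n → ℂ) : ℝ :=
  sSup { r : ℝ | ∃ w : Fin m × Fin n → ℂ, nrm w = 1 ∧ SRle k w ∧ r = ‖ip w v‖ }

/-- The `S(k)`-operator norm. -/
def Snorm {m n : ℕ} (k : ℕ) (X : Matrix (Fin m × Fin n) (Fin m × Fin n) ℂ) : ℝ :=
  sSup { r : ℝ | ∃ v w : Fin m × Fin n → ℂ, nrm v = 1 ∧ nrm w = 1 ∧ SRle k v ∧ SRle k w ∧
    r = ‖ip w (X.mulVec v)‖ }

/-- `k`-block positivity: `⟨v|X|v⟩ ≥ 0` for all unit vectors of Schmidt rank at most `k`. -/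
def kBlockPos {m n : ℕ} (k : ℕ) (X : Matrix (Fin m × Fin n) (Fin m × Fin n) ℂ) : Prop :=
  ∀ v : Fin m × Fin n → ℂ, nrm v = 1 → SRle k v → 0 ≤ (ip v (X.mulVec v)).re

/-! ### Auxiliary lemmas -/

def toE {ι : Type} (v : ι → ℂ) : EuclideanSpace ℂ ι := (WithLp.equiv 2 (ι → ℂ)).symm v

lemma toE_apply {ι : Type} (v : ι → ℂ) (i : ι) : toE v i = v i := rfl

lemma ip_eq_inner {ι : Type} [Fintype ι] (w v : ι → ℂ) :
    ip w v = inner (𝕜 := ℂ) (toE w) (toE v) := by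
  simp [ip, PiLp.inner_apply, RCLike.inner_apply, toE_apply]
  exact Finset.sum_congr rfl fun i _ => mul_comm _ _

lemma nrm_eq_norm {ι : Type} [Fintype ι] (v : ι → ℂ) :
    nrm v = ‖toE v‖ := by
  rw [EuclideanSpace.norm_eq]
  simp [nrm, Complex.normSq_eq_norm_sq, toE_apply]

lemma nrm_nonneg {ι : Type} [Fintype ι] (v : ι → ℂ) : 0 ≤ nrm v := Real.sqrt_nonneg _

lemma ip_self {ι : Type} [Fintype ι] (x : ι → ℂ) : ip x x = ((nrm x ^ 2 : ℝ) : ℂ) := by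
  have h : ∑ i, Complex.normSq (x i) = nrm x ^ 2 := by
    rw [nrm, Real.sq_sqrt (Finset.sum_nonneg fun i _ => Complex.normSq_nonneg _)]
  rw [ip, ← h]
  push_cast
  refine Finset.sum_congr rfl fun i _ => ?_
  rw [← Complex.normSq_eq_conj_mul_self]

lemma nrm_eq_one_of_ip {ι : Type} [Fintype ι] (x : ι → ℂ) (h : ip x x = 1) : nrm x = 1 := by
  have h2 : ((nrm x ^ 2 : ℝ) : ℂ) = ((1 : ℝ) : ℂ) := by rw [← ip_self, h]; norm_num
  have h3 : nrm x ^ 2 = 1 := by exact_mod_cast h2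
  nlinarith [nrm_nonneg x]

lemma sq_nrm_eq_of_ip {ι : Type} [Fintype ι] (x : ι → ℂ) {r : ℝ} (h : ip x x = (r : ℂ)) :
    nrm x ^ 2 = r := by
  have h2 : ((nrm x ^ 2 : ℝ) : ℂ) = (r : ℂ) := by rw [← ip_self, h]
  exact_mod_cast h2

lemma bessel {ι I : Type} [Fintype ι] [Fintype I] (c : I → ι → ℂ)
    (hON : Orthonormal ℂ (fun i => toE (c i))) (x : ι → ℂ) :
    ∑ i, ‖ip (c i) x‖ ^ 2 ≤ nrm x ^ 2 := by
  have := hON.sum_inner_products_le (s := Finset.univ) (toE x)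
  rw [nrm_eq_norm]
  refine le_trans (le_of_eq ?_) this
  refine Finset.sum_congr rfl fun i _ => ?_
  rw [ip_eq_inner]

lemma abs_sum_mul_le {d : ℕ} (x y : Fin d → ℂ) :
    ‖∑ j, x j * y j‖ ≤
      Real.sqrt (∑ j, ‖x j‖ ^ 2) * Real.sqrt (∑ j, ‖y j‖ ^ 2) := by
  have h1 : (∑ j, x j * y j) = ip (fun j => (starRingEnd ℂ) (x j)) y := by
    simp [ip]
  rw [h1, ip_eq_inner]
  refine le_trans (norm_inner_le_norm _ _) ?_
  rw [← nrm_eq_norm, ← nrm_eq_norm, nrm, nrm]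
  apply mul_le_mul <;>
    simp [Complex.normSq_eq_norm_sq, le_refl, Real.sqrt_nonneg]

lemma ip_sum_left {ι I : Type} [Fintype ι] [Fintype I] (W : I → ι → ℂ) (v : ι → ℂ) :
    ip (fun q => ∑ i, W i q) v = ∑ i, ip (W i) v := by
  simp only [ip, map_sum, Finset.sum_mul]
  exact Finset.sum_comm

lemma ip_sum_right {ι I : Type} [Fintype ι] [Fintype I] (w : ι → ℂ) (V : I → ι → ℂ) :
    ip w (fun q => ∑ i, V i q) = ∑ i, ip w (V i) := by
  simp only [ip, Finset.mul_sum]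
  exact Finset.sum_comm

lemma ip_tens {m n : ℕ} (A : Fin m → ℂ) (B : Fin n → ℂ) (C : Fin m → ℂ) (D : Fin n → ℂ) :
    ip (fun p : Fin m × Fin n => A p.1 * B p.2) (fun p : Fin m × Fin n => C p.1 * D p.2)
      = ip A C * ip B D := by
  simp only [ip, Fintype.sum_prod_type, map_mul]
  rw [Finset.sum_mul_sum]
  refine Finset.sum_congr rfl fun p1 _ => ?_
  refine Finset.sum_congr rfl fun p2 _ => ?_
  ring

lemma ip_sum_tens {m n : ℕ} {I J : Type} [Fintype I] [Fintype J]
    (A : I → Fin m → ℂ) (B : I → Fin n → ℂ) (C : J → Fin m → ℂ) (D : J → Fin n → ℂ) :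
    ip (fun p : Fin m × Fin n => ∑ i, A i p.1 * B i p.2)
      (fun p : Fin m × Fin n => ∑ j, C j p.1 * D j p.2)
      = ∑ i, ∑ j, ip (A i) (C j) * ip (B i) (D j) := by
  rw [ip_sum_left (W := fun i (p : Fin m × Fin n) => A i p.1 * B i p.2)]
  refine Finset.sum_congr rfl fun i _ => ?_
  rw [ip_sum_right (V := fun j (p : Fin m × Fin n) => C j p.1 * D j p.2)]
  exact Finset.sum_congr rfl fun j _ => ip_tens _ _ _ _

lemma ip_smul_right' {ι : Type} [Fintype ι] (w z : ι → ℂ) (r : ℂ) :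
    ip w (fun q => r * z q) = r * ip w z := by
  simp [ip, Finset.mul_sum]; refine Finset.sum_congr rfl fun i _ => by ring

lemma ip_smul_left' {ι : Type} [Fintype ι] (w z : ι → ℂ) (r : ℂ) :
    ip (fun q => r * w q) z = (starRingEnd ℂ) r * ip w z := by
  simp [ip, Finset.mul_sum]; refine Finset.sum_congr rfl fun i _ => by ring

lemma ip_comm {ι : Type} [Fintype ι] (w z : ι → ℂ) :
    ip w z = (starRingEnd ℂ) (ip z w) := by
  simp [ip]; refine Finset.sum_congr rfl fun i _ => by ring

lemma abs_ip_comm {ι : Type} [Fintype ι] (w z : ι → ℂ) :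
    ‖ip w z‖ = ‖ip z w‖ := by
  rw [ip_comm]; exact Complex.norm_conj _

lemma card_filter_lt (N k : ℕ) (hk : k ≤ N) :
    (Finset.univ.filter (fun i : Fin N => (i : ℕ) < k)).card = k := by
  have : (Finset.univ.filter (fun i : Fin N => (i : ℕ) < k)).card = (Finset.range k).card := by
    refine Finset.card_nbij (fun i => (i : ℕ)) ?_ ?_ ?_
    · intro i hi; simpa using (by simpa using hi : (i:ℕ) < k)
    · intro i _ j _ hij; exact Fin.val_injective hij
    · intro j hj
      have hjk : j < k := by simpa using hj
      exact ⟨⟨j, lt_of_lt_of_le hjk hk⟩, by simpa using hjk, rfl⟩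
  simpa using this

lemma rearrange {N k : ℕ} (hk1 : 1 ≤ k) (hk : k ≤ N) (α : Fin N → ℝ)
    (hα0 : ∀ i, 0 ≤ α i) (hmono : Antitone α) (t : Fin N → ℝ)
    (ht0 : ∀ i, 0 ≤ t i) (ht1 : ∀ i, t i ≤ 1) (htsum : ∑ i, t i ≤ k) :
    ∑ i, α i ^ 2 * t i ≤ ∑ i ∈ Finset.univ.filter (fun i : Fin N => (i : ℕ) < k), α i ^ 2 := by
  have hkN : k - 1 < N := by omega
  set c : ℝ := α ⟨k - 1, hkN⟩ ^ 2 with hc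
  have hcnn : 0 ≤ c := sq_nonneg _
  set S := Finset.univ.filter (fun i : Fin N => (i : ℕ) < k) with hS
  have hcard : S.card = k := card_filter_lt N k hk
  have h1 : ∀ i ∈ S, α i ^ 2 * t i ≤ α i ^ 2 + c * (t i - 1) := by
    intro i hi
    have hik : (i : ℕ) < k := by simpa [hS] using hi
    have hα : c ≤ α i ^ 2 := by
      have : α ⟨k - 1, hkN⟩ ≤ α i := hmono (by simp [Fin.le_def]; omega)
      exact pow_le_pow_left₀ (hα0 _) this 2
    nlinarith [ht1 i, ht0 i]
  have h2 : ∀ i ∈ Sᶜ, α i ^ 2 * t i ≤ c * t i := by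
    intro i hi
    have hik : ¬ (i : ℕ) < k := by simpa [hS] using hi
    have hα : α i ^ 2 ≤ c := by
      have : α i ≤ α ⟨k - 1, hkN⟩ := hmono (by simp [Fin.le_def]; omega)
      exact pow_le_pow_left₀ (hα0 _) this 2
    nlinarith [ht0 i]
  have hsplit : ∑ i, α i ^ 2 * t i = ∑ i ∈ S, α i ^ 2 * t i + ∑ i ∈ Sᶜ, α i ^ 2 * t i :=
    (Finset.sum_add_sum_compl S _).symm
  have htsplit : ∑ i ∈ S, t i + ∑ i ∈ Sᶜ, t i = ∑ i, t i :=
    Finset.sum_add_sum_compl S _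
  have key : ∑ i, α i ^ 2 * t i ≤ (∑ i ∈ S, α i ^ 2) + c * ((∑ i, t i) - k) := by
    rw [hsplit]
    have b1 : ∑ i ∈ S, α i ^ 2 * t i ≤ ∑ i ∈ S, (α i ^ 2 + c * (t i - 1)) :=
      Finset.sum_le_sum h1
    have b2 : ∑ i ∈ Sᶜ, α i ^ 2 * t i ≤ ∑ i ∈ Sᶜ, c * t i := Finset.sum_le_sum h2
    have e1 : ∑ i ∈ S, (α i ^ 2 + c * (t i - 1))
        = (∑ i ∈ S, α i ^ 2) + c * ((∑ i ∈ S, t i) - k) := by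
      rw [Finset.sum_add_distrib, ← Finset.mul_sum, Finset.sum_sub_distrib]
      simp [hcard, Finset.sum_const]
    have e2 : ∑ i ∈ Sᶜ, c * t i = c * ∑ i ∈ Sᶜ, t i := (Finset.mul_sum _ _ _).symm
    rw [e1] at b1; rw [e2] at b2
    nlinarith [b1, b2, htsplit]
  nlinarith [key, htsum]

lemma exists_ON_decomp {n k : ℕ} (b : Fin k → Fin n → ℂ) :
    ∃ (d : ℕ), d ≤ k ∧ ∃ (g : Fin d → Fin n → ℂ) (c : Fin k → Fin d → ℂ),
      Orthonormal ℂ (fun j => toE (g j)) ∧ ∀ l q, b l q = ∑ j, c l j * g j q := by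
  classical
  let B : Fin k → EuclideanSpace ℂ (Fin n) := fun l => toE (b l)
  let V : Submodule ℂ (EuclideanSpace ℂ (Fin n)) := Submodule.span ℂ (Set.range B)
  let d := Module.finrank ℂ V
  have hdk : d ≤ k := by
    have := finrank_range_le_card (R := ℂ) B
    simpa [Set.finrank] using this
  let g0 : OrthonormalBasis (Fin d) ℂ V := stdOrthonormalBasis ℂ V
  have hmem : ∀ l, B l ∈ V := fun l => Submodule.subset_span (Set.mem_range_self l)
  refine ⟨d, hdk, fun j q => (g0 j : EuclideanSpace ℂ (Fin n)) q,
    fun l j => g0.repr (⟨B l, hmem l⟩ : V) j, ?_, ?_⟩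
  · have hfam : (fun j => toE (fun q => (g0 j : EuclideanSpace ℂ (Fin n)) q))
        = fun j => (g0 j : EuclideanSpace ℂ (Fin n)) := rfl
    rw [hfam, orthonormal_iff_ite]
    intro i j
    rw [← Submodule.coe_inner]
    exact orthonormal_iff_ite.mp g0.orthonormal i j
  · intro l q
    have h1 : ((⟨B l, hmem l⟩ : V) : EuclideanSpace ℂ (Fin n))
        = ∑ j, g0.repr (⟨B l, hmem l⟩ : V) j • (g0 j : EuclideanSpace ℂ (Fin n)) := by
      conv_lhs => rw [← g0.sum_repr (⟨B l, hmem l⟩ : V)]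
      push_cast
      rfl
    have h2 : b l q = EuclideanSpace.proj (𝕜 := ℂ) q
        ((⟨B l, hmem l⟩ : V) : EuclideanSpace ℂ (Fin n)) := rfl
    rw [h2, h1, map_sum]
    refine Finset.sum_congr rfl fun j _ => ?_
    rw [map_smul]
    rfl

lemma ON_of_ip {ι I : Type} [Fintype ι] [Fintype I] [DecidableEq I] (c : I → ι → ℂ)
    (h : ∀ i j, ip (c i) (c j) = if i = j then 1 else 0) :
    Orthonormal ℂ (fun i => toE (c i)) :=
  orthonormal_iff_ite.mpr (fun i j => by rw [← ip_eq_inner]; exact h i j)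

lemma upper_bound {m n k : ℕ} (hk1 : 1 ≤ k) (hk : k ≤ min m n)
    (α : Fin (min m n) → ℝ) (e : Fin (min m n) → Fin m → ℂ) (f : Fin (min m n) → Fin n → ℂ)
    (he : ∀ i j, ip (e i) (e j) = if i = j then 1 else 0)
    (hf : ∀ i j, ip (f i) (f j) = if i = j then 1 else 0)
    (hα0 : ∀ i, 0 ≤ α i) (hmono : Antitone α)
    (w : Fin m × Fin n → ℂ) (hw : nrm w = 1) (hsr : SRle k w) :
    ‖ip w (fun p => ∑ i, (α i : ℂ) * (e i p.1 * f i p.2))‖ ≤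
      Real.sqrt (∑ i ∈ Finset.univ.filter (fun i : Fin (min m n) => (i : ℕ) < k), α i ^ 2) := by
  classical
  obtain ⟨a, b, hwab⟩ := hsr
  obtain ⟨d, hdk, g, c, hgON, hbg⟩ := exists_ON_decomp b
  set A : Fin d → Fin m → ℂ := fun j p1 => ∑ l, c l j * a l p1 with hA
  have hw2 : w = fun p => ∑ j, A j p.1 * g j p.2 := by
    funext p
    rw [hwab]
    calc ∑ l, a l p.1 * b l p.2 = ∑ l, ∑ j, a l p.1 * (c l j * g j p.2) := by
          refine Finset.sum_congr rfl fun l _ => ?_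
          rw [hbg l p.2, Finset.mul_sum]
      _ = ∑ j, ∑ l, a l p.1 * (c l j * g j p.2) := Finset.sum_comm
      _ = ∑ j, A j p.1 * g j p.2 := by
          refine Finset.sum_congr rfl fun j _ => ?_
          rw [hA]; simp only; rw [Finset.sum_mul]
          exact Finset.sum_congr rfl fun l _ => by ring
  have hvform : (fun p : Fin m × Fin n => ∑ i, (α i : ℂ) * (e i p.1 * f i p.2))
      = fun p => ∑ i, ((α i : ℂ) * e i p.1) * f i p.2 := by
    funext p; exact Finset.sum_congr rfl fun i _ => by ring
  set x : Fin d → Fin (min m n) → ℂ := fun j i => ip (A j) (e i) with hx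
  set y : Fin d → Fin (min m n) → ℂ := fun j i => ip (g j) (f i) with hy
  have hipwv : ip w (fun p => ∑ i, (α i : ℂ) * (e i p.1 * f i p.2))
      = ∑ i, (α i : ℂ) * ∑ j, x j i * y j i := by
    rw [hvform, hw2,
      ip_sum_tens A g (fun i p1 => (α i : ℂ) * e i p1) f]
    rw [Finset.sum_comm]
    refine Finset.sum_congr rfl fun i _ => ?_
    rw [Finset.mul_sum]
    refine Finset.sum_congr rfl fun j _ => ?_
    rw [ip_smul_right' (A j) (e i) ((α i : ℂ))]
    rw [hx, hy]; ring
  set t : Fin (min m n) → ℝ := fun i => ∑ j, ‖y j i‖ ^ 2 with ht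
  set X : Fin (min m n) → ℝ := fun i => Real.sqrt (∑ j, ‖x j i‖ ^ 2) with hX
  have ht0 : ∀ i, 0 ≤ t i := fun i => Finset.sum_nonneg fun j _ => sq_nonneg _
  -- step 1
  have step1 : ‖ip w (fun p => ∑ i, (α i : ℂ) * (e i p.1 * f i p.2))‖
      ≤ ∑ i, α i * (X i * Real.sqrt (t i)) := by
    rw [hipwv]
    refine le_trans (norm_sum_le _ _) (Finset.sum_le_sum fun i _ => ?_)
    rw [norm_mul, Complex.norm_of_nonneg (hα0 i)]
    refine mul_le_mul_of_nonneg_left ?_ (hα0 i)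
    exact abs_sum_mul_le (fun j => x j i) (fun j => y j i)
  -- orthonormality of g in ip terms
  have hgip : ∀ j j', ip (g j) (g j') = if j = j' then 1 else 0 := fun j j' => by
    rw [ip_eq_inner]; exact orthonormal_iff_ite.mp hgON j j'
  -- norms
  have hfnrm : ∀ i, nrm (f i) ^ 2 = 1 := fun i =>
    sq_nrm_eq_of_ip (f i) (by rw [hf i i]; norm_num)
  have hgnrm : ∀ j, nrm (g j) ^ 2 = 1 := fun j =>
    sq_nrm_eq_of_ip (g j) (by rw [hgip j j]; norm_num)
  -- step 3 : sum of X squares ≤ 1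
  have hXsq : ∀ i, X i ^ 2 = ∑ j, ‖x j i‖ ^ 2 := fun i =>
    Real.sq_sqrt (Finset.sum_nonneg fun j _ => sq_nonneg _)
  have hAnrm : ∑ j, nrm (A j) ^ 2 = 1 := by
    have hww : ip w w = ((∑ j, nrm (A j) ^ 2 : ℝ) : ℂ) := by
      rw [hw2, ip_sum_tens A g A g]
      push_cast
      refine Finset.sum_congr rfl fun j _ => ?_
      rw [show (∑ j', ip (A j) (A j') * ip (g j) (g j'))
          = ∑ j', ip (A j) (A j') * (if j = j' then 1 else 0) from
        Finset.sum_congr rfl fun j' _ => by rw [hgip j j']]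
      simp only [mul_ite, mul_one, mul_zero, Finset.sum_ite_eq, Finset.mem_univ, if_true]
      rw [ip_self]; push_cast; ring
    have := sq_nrm_eq_of_ip w hww
    rw [hw] at this; nlinarith [this]
  have hsumX : ∑ i, X i ^ 2 ≤ 1 := by
    calc ∑ i, X i ^ 2 = ∑ i, ∑ j, ‖x j i‖ ^ 2 :=
          Finset.sum_congr rfl fun i _ => hXsq i
      _ = ∑ j, ∑ i, ‖x j i‖ ^ 2 := Finset.sum_comm
      _ ≤ ∑ j, nrm (A j) ^ 2 := by
          refine Finset.sum_le_sum fun j _ => ?_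
          have hb := bessel e (ON_of_ip e he) (A j)
          refine le_trans (le_of_eq (Finset.sum_congr rfl fun i _ => ?_)) hb
          rw [hx]; simp only; rw [abs_ip_comm]
      _ = 1 := hAnrm
  -- step 4 : t i ≤ 1
  have ht1 : ∀ i, t i ≤ 1 := fun i => by
    have hb := bessel g hgON (f i)
    rw [hfnrm i] at hb
    exact hb
  -- step 5 : ∑ t ≤ k
  have htsum : ∑ i, t i ≤ (k : ℝ) := by
    calc ∑ i, t i = ∑ j, ∑ i, ‖y j i‖ ^ 2 := Finset.sum_comm
      _ ≤ ∑ j, nrm (g j) ^ 2 := by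
          refine Finset.sum_le_sum fun j _ => ?_
          have hb := bessel f (ON_of_ip f hf) (g j)
          refine le_trans (le_of_eq (Finset.sum_congr rfl fun i _ => ?_)) hb
          rw [hy]; simp only; rw [abs_ip_comm]
      _ = d := by simp [hgnrm]
      _ ≤ k := by exact_mod_cast hdk
  have hreq := rearrange hk1 hk α hα0 hmono t ht0 ht1 htsum
  -- conclusion
  have hQnn : 0 ≤ ∑ i, α i * (X i * Real.sqrt (t i)) :=
    Finset.sum_nonneg fun i _ =>
      mul_nonneg (hα0 i) (mul_nonneg (Real.sqrt_nonneg _) (Real.sqrt_nonneg _))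
  have hQ2 : (∑ i, α i * (X i * Real.sqrt (t i))) ^ 2
      ≤ (∑ i, X i ^ 2) * (∑ i, α i ^ 2 * t i) := by
    have hcs := Finset.sum_mul_sq_le_sq_mul_sq Finset.univ X (fun i => α i * Real.sqrt (t i))
    calc (∑ i, α i * (X i * Real.sqrt (t i))) ^ 2
        = (∑ i, X i * (α i * Real.sqrt (t i))) ^ 2 := by
          congr 1; exact Finset.sum_congr rfl fun i _ => by ring
      _ ≤ (∑ i, X i ^ 2) * (∑ i, (α i * Real.sqrt (t i)) ^ 2) := hcs
      _ = (∑ i, X i ^ 2) * (∑ i, α i ^ 2 * t i) := by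
          congr 1; refine Finset.sum_congr rfl fun i _ => ?_
          rw [mul_pow, Real.sq_sqrt (ht0 i)]
  have habsnn : 0 ≤ ‖ip w (fun p => ∑ i, (α i : ℂ) * (e i p.1 * f i p.2))‖ :=
    norm_nonneg _
  have hα2t0 : 0 ≤ ∑ i, α i ^ 2 * t i :=
    Finset.sum_nonneg fun i _ => mul_nonneg (sq_nonneg _) (ht0 i)
  have hsX0 : 0 ≤ ∑ i, X i ^ 2 := Finset.sum_nonneg fun i _ => sq_nonneg _
  have hP2 : (‖ip w (fun p => ∑ i, (α i : ℂ) * (e i p.1 * f i p.2))‖) ^ 2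
      ≤ ∑ i ∈ Finset.univ.filter (fun i : Fin (min m n) => (i : ℕ) < k), α i ^ 2 := by
    nlinarith [step1, hQ2, hQnn, habsnn, hsumX, hreq, hα2t0, hsX0]
  calc ‖ip w (fun p => ∑ i, (α i : ℂ) * (e i p.1 * f i p.2))‖
      = Real.sqrt ((‖ip w (fun p => ∑ i, (α i : ℂ) * (e i p.1 * f i p.2))‖) ^ 2) :=
        (Real.sqrt_sq habsnn).symm
    _ ≤ _ := Real.sqrt_le_sqrt hP2

/-- For a unit vector `v ∈ ℂ^m ⊗ ℂ^n` with Schmidt decomposition having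
coefficients `α_1 ≥ α_2 ≥ ⋯ ≥ 0`, the supremum of `|⟨w|v⟩|` over all unit vectors `w` of
Schmidt rank at most `k` equals the square root of the sum of the squares of the `k` largest
Schmidt coefficients of `v`. -/
theorem snorm_eq_sqrt_sum_sq (m n k : ℕ) (hk1 : 1 ≤ k) (hk : k ≤ min m n)
    (v : Fin m × Fin n → ℂ) (α : Fin (min m n) → ℝ)
    (e : Fin (min m n) → Fin m → ℂ) (f : Fin (min m n) → Fin n → ℂ)
    (he : ∀ i j, ip (e i) (e j) = if i = j then 1 else 0)
    (hf : ∀ i j, ip (f i) (f j) = if i = j then 1 else 0)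
    (hα0 : ∀ i, 0 ≤ α i) (hmono : Antitone α)
    (hv : v = fun p => ∑ i, (α i : ℂ) * (e i p.1 * f i p.2))
    (hunit : nrm v = 1) :
    snorm k v =
      Real.sqrt (∑ i ∈ Finset.univ.filter (fun i : Fin (min m n) => (i : ℕ) < k), α i ^ 2) := by
  classical
  set s := ∑ i ∈ Finset.univ.filter (fun i : Fin (min m n) => (i : ℕ) < k), α i ^ 2 with hs
  have hs0 : 0 ≤ s := Finset.sum_nonneg fun i _ => sq_nonneg _
  -- the full sum of squares is 1
  have hvform : v = fun p : Fin m × Fin n => ∑ i, ((α i : ℂ) * e i p.1) * f i p.2 := by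
    rw [hv]; funext p; exact Finset.sum_congr rfl fun i _ => by ring
  have hterm : ∀ i i', ip (fun p1 => (α i : ℂ) * e i p1) (fun p1 => (α i' : ℂ) * e i' p1)
      * ip (f i) (f i') = if i = i' then ((α i ^ 2 : ℝ) : ℂ) else 0 := by
    intro i i'
    rw [ip_smul_left', ip_smul_right', he, hf]
    by_cases h : i = i'
    · subst h; simp [Complex.conj_ofReal]; push_cast; ring
    · simp [h]
  have hvv : ip v v = ((∑ i, α i ^ 2 : ℝ) : ℂ) := by
    rw [hvform, ip_sum_tens (fun i p1 => (α i : ℂ) * e i p1) f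
      (fun i p1 => (α i : ℂ) * e i p1) f]
    push_cast
    refine Finset.sum_congr rfl fun i _ => ?_
    rw [show (∑ i', ip (fun p1 => (α i : ℂ) * e i p1) (fun p1 => (α i' : ℂ) * e i' p1)
        * ip (f i) (f i')) = ∑ i', if i = i' then ((α i ^ 2 : ℝ) : ℂ) else 0 from
      Finset.sum_congr rfl fun i' _ => hterm i i']
    simp
  have hsum1 : ∑ i, α i ^ 2 = 1 := by
    have := sq_nrm_eq_of_ip v hvv
    rw [hunit] at this; nlinarith [this]
  have hNpos : 0 < min m n := lt_of_lt_of_le hk1 hk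
  have hzmem : (⟨0, hNpos⟩ : Fin (min m n)) ∈
      Finset.univ.filter (fun i : Fin (min m n) => (i : ℕ) < k) := by
    simp; omega
  have hα0pos : 0 < α ⟨0, hNpos⟩ ^ 2 := by
    rcases eq_or_lt_of_le (hα0 ⟨0, hNpos⟩) with h | h
    · exfalso
      have hall : ∀ i, α i = 0 := fun i =>
        le_antisymm (le_trans (hmono (by simp [Fin.le_def])) h.symm.le) (hα0 i)
      rw [Finset.sum_congr rfl (fun i _ => by rw [hall i])] at hsum1
      simp at hsum1
    · positivity
  have hspos : 0 < s :=
    lt_of_lt_of_le hα0pos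
      (Finset.single_le_sum (f := fun i => α i ^ 2) (fun i _ => sq_nonneg _) hzmem)
  set r := Real.sqrt s with hr
  have hrpos : 0 < r := Real.sqrt_pos.mpr hspos
  have hr2 : r * r = s := Real.mul_self_sqrt hs0
  -- the witness
  set cl : Fin k → Fin (min m n) := Fin.castLE hk with hcl
  have hclinj : Function.Injective cl := Fin.castLE_injective hk
  set w₀ : Fin m × Fin n → ℂ :=
    fun p => ∑ l : Fin k, ((α (cl l) / r : ℝ) : ℂ) * e (cl l) p.1 * f (cl l) p.2 with hw₀
  have hsr₀ : SRle k w₀ :=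
    ⟨fun l p1 => ((α (cl l) / r : ℝ) : ℂ) * e (cl l) p1, fun l => f (cl l), rfl⟩
  have hsumcl : ∑ l : Fin k, α (cl l) ^ 2 = s := by
    rw [hs]
    refine Finset.sum_nbij (fun l => cl l) ?_ ?_ ?_ ?_
    · intro l _; simp [hcl]
    · intro l _ l' _ h; exact hclinj h
    · intro i hi
      have : (i : ℕ) < k := by simpa using hi
      exact ⟨⟨(i : ℕ), this⟩, by simp, by simp [hcl, Fin.ext_iff]⟩
    · intro l _; rfl
  have hterm₀ : ∀ (l l' : Fin k),
      ip (fun p1 => ((α (cl l) / r : ℝ) : ℂ) * e (cl l) p1)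
        (fun p1 => ((α (cl l') / r : ℝ) : ℂ) * e (cl l') p1) * ip (f (cl l)) (f (cl l'))
      = if l = l' then (((α (cl l) / r) ^ 2 : ℝ) : ℂ) else 0 := by
    intro l l'
    rw [ip_smul_left', ip_smul_right', he, hf]
    by_cases h : l = l'
    · subst h; simp [Complex.conj_ofReal]; push_cast; ring
    · have h2 : cl l ≠ cl l' := fun hc => h (hclinj hc)
      simp [h, h2]
  have hww₀ : ip w₀ w₀ = ((∑ l : Fin k, (α (cl l) / r) ^ 2 : ℝ) : ℂ) := by
    rw [hw₀, ip_sum_tens (fun l p1 => ((α (cl l) / r : ℝ) : ℂ) * e (cl l) p1) (fun l => f (cl l))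
      (fun l p1 => ((α (cl l) / r : ℝ) : ℂ) * e (cl l) p1) (fun l => f (cl l))]
    have hstep0 : ∀ l : Fin k,
        (∑ l', ip (fun p1 => ((α (cl l) / r : ℝ) : ℂ) * e (cl l) p1)
          (fun p1 => ((α (cl l') / r : ℝ) : ℂ) * e (cl l') p1) * ip (f (cl l)) (f (cl l')))
        = (((α (cl l) / r) ^ 2 : ℝ) : ℂ) := by
      intro l
      rw [Finset.sum_congr rfl fun l' _ => hterm₀ l l']
      simp
    rw [Finset.sum_congr rfl fun l _ => hstep0 l]
    push_cast
    ring
  have hnrm₀ : nrm w₀ = 1 := by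
    refine nrm_eq_one_of_ip _ ?_
    rw [hww₀]
    have : ∑ l : Fin k, (α (cl l) / r) ^ 2 = 1 := by
      have : ∑ l : Fin k, (α (cl l) / r) ^ 2 = (∑ l : Fin k, α (cl l) ^ 2) / (r * r) := by
        rw [Finset.sum_div]
        exact Finset.sum_congr rfl fun l _ => by rw [div_pow]; ring_nf
      rw [this, hsumcl, hr2, div_self hspos.ne']
    rw [this]; norm_num
  -- value on the witness
  have hterm₁ : ∀ (l : Fin k) (i : Fin (min m n)),
      ip (fun p1 => ((α (cl l) / r : ℝ) : ℂ) * e (cl l) p1) (fun p1 => (α i : ℂ) * e i p1)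
        * ip (f (cl l)) (f i)
      = if cl l = i then ((α (cl l) / r * α (cl l) : ℝ) : ℂ) else 0 := by
    intro l i
    rw [ip_smul_left', ip_smul_right', he, hf]
    by_cases h : cl l = i
    · subst h; simp [Complex.conj_ofReal]; try push_cast; try ring
    · simp [h]
  have hipv : ip w₀ v = ((r : ℝ) : ℂ) := by
    rw [hvform, hw₀, ip_sum_tens (fun l p1 => ((α (cl l) / r : ℝ) : ℂ) * e (cl l) p1)
      (fun l => f (cl l)) (fun i p1 => (α i : ℂ) * e i p1) f]
    have hstep : ∀ l : Fin k,
        (∑ i, ip (fun p1 => ((α (cl l) / r : ℝ) : ℂ) * e (cl l) p1)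
          (fun p1 => (α i : ℂ) * e i p1) * ip (f (cl l)) (f i))
        = ((α (cl l) / r * α (cl l) : ℝ) : ℂ) := by
      intro l
      rw [Finset.sum_congr rfl fun i _ => hterm₁ l i]
      simp
    rw [Finset.sum_congr rfl fun l _ => hstep l]
    push_cast
    rw [show (∑ l : Fin k, (α (cl l) : ℂ) / r * α (cl l))
        = ((∑ l : Fin k, α (cl l) ^ 2 : ℝ) : ℂ) / r from by
      push_cast; rw [Finset.sum_div]; exact Finset.sum_congr rfl fun l _ => by ring]
    rw [hsumcl]
    rw [show ((s : ℝ) : ℂ) = ((r * r : ℝ) : ℂ) from by rw [hr2]]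
    push_cast
    field_simp
  -- conclude
  have hub : ∀ x ∈ { x : ℝ | ∃ w : Fin m × Fin n → ℂ,
      nrm w = 1 ∧ SRle k w ∧ x = ‖ip w v‖ }, x ≤ r := by
    rintro x ⟨w, hw1, hwsr, rfl⟩
    rw [hv]
    exact upper_bound hk1 hk α e f he hf hα0 hmono w hw1 hwsr
  have hmem : r ∈ { x : ℝ | ∃ w : Fin m × Fin n → ℂ,
      nrm w = 1 ∧ SRle k w ∧ x = ‖ip w v‖ } := by
    refine ⟨w₀, hnrm₀, hsr₀, ?_⟩
    rw [hipv]
    rw [Complex.norm_of_nonneg hrpos.le]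
  rw [snorm]
  exact le_antisymm (csSup_le ⟨r, hmem⟩ hub) (le_csSup ⟨r, hub⟩ hmem)
end
end

section
/- A linear map Φ : M_m → M_n is completely positive if and only if its Choi matrix C_Φ = Σ_{i,j} |i⟩⟨j| ⊗ Φ(|i⟩⟨j|) is positive semidefinite, if and only if there exist at most mn operators A_k ∈ M_{n,m} such that Φ(X) = Σ_k A_k X A_k† for all X. -/
open scoped BigOperators ComplexOrder

noncomputable section

/-- The ampliation `id_k ⊗ Φ` of a map `Φ : M_m → M_n`, acting on `M_k ⊗ M_m`. -/
def ampliate (k : ℕ) {m n : ℕ} (Φ : Matrix (Fin m) (Fin m) ℂ → Matrix (Fin n) (Fin n) ℂ)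
    (X : Matrix (Fin k × Fin m) (Fin k × Fin m) ℂ) : Matrix (Fin k × Fin n) (Fin k × Fin n) ℂ :=
  Matrix.of fun p q => Φ (Matrix.of fun a b => X (p.1, a) (q.1, b)) p.2 q.2

/-- `Φ` is `k`-positive if `id_k ⊗ Φ` maps positive semidefinite matrices to positive
semidefinite matrices. -/
def kPositive (k : ℕ) {m n : ℕ} (Φ : Matrix (Fin m) (Fin m) ℂ → Matrix (Fin n) (Fin n) ℂ) :
    Prop :=
  ∀ X : Matrix (Fin k × Fin m) (Fin k × Fin m) ℂ, X.PosSemidef → (ampliate k Φ X).PosSemidef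

/-- `Φ` is completely positive if it is `k`-positive for all `k`. -/
def CompletelyPositive {m n : ℕ} (Φ : Matrix (Fin m) (Fin m) ℂ → Matrix (Fin n) (Fin n) ℂ) :
    Prop :=
  ∀ k : ℕ, kPositive k Φ

/-- The Choi matrix `C_Φ = Σ_{i,j} |i⟩⟨j| ⊗ Φ(|i⟩⟨j|)` of `Φ : M_m → M_n`. -/
def choi {m n : ℕ} (Φ : Matrix (Fin m) (Fin m) ℂ → Matrix (Fin n) (Fin n) ℂ) :
    Matrix (Fin m × Fin n) (Fin m × Fin n) ℂ :=
  Matrix.of fun p q => Φ (Matrix.single p.1 q.1 (1 : ℂ)) p.2 q.2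

lemma sum_rotate {α β γ M : Type*} [Fintype α] [Fintype β] [Fintype γ] [AddCommMonoid M]
    (f : α → β → γ → M) :
    ∑ a, ∑ b, ∑ c, f a b c = ∑ c, ∑ b, ∑ a, f a b c :=
  calc ∑ a, ∑ b, ∑ c, f a b c
      = ∑ b, ∑ a, ∑ c, f a b c := Finset.sum_comm
    _ = ∑ b, ∑ c, ∑ a, f a b c := Finset.sum_congr rfl fun _ _ => Finset.sum_comm
    _ = ∑ c, ∑ b, ∑ a, f a b c := Finset.sum_comm

open Matrix in
lemma phi_apply_expand {m n : ℕ} (Φ : Matrix (Fin m) (Fin m) ℂ →ₗ[ℂ] Matrix (Fin n) (Fin n) ℂ)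
    (X : Matrix (Fin m) (Fin m) ℂ) (a b : Fin n) :
    Φ X a b = ∑ i, ∑ j, X i j * Φ (single i j 1) a b := by
  have hsb : ∀ i j, single i j (X i j) = X i j • single i j (1 : ℂ) := by
    intro i j; rw [smul_single, smul_eq_mul, mul_one]
  conv_lhs => rw [matrix_eq_sum_single X]
  simp only [hsb, map_sum, _root_.map_smul, Matrix.sum_apply, Matrix.smul_apply, smul_eq_mul]

open Matrix in
lemma cp_to_choi {m n : ℕ} (Φ : Matrix (Fin m) (Fin m) ℂ →ₗ[ℂ] Matrix (Fin n) (Fin n) ℂ)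
    (h : CompletelyPositive (fun X => Φ X)) : (choi (fun X => Φ X)).PosSemidef := by
  classical
  set E : Matrix (Fin m × Fin m) (Fin 1) ℂ :=
    Matrix.of (fun p _ => if p.1 = p.2 then 1 else 0) with hE
  have hX : (E * Eᴴ).PosSemidef := posSemidef_self_mul_conjTranspose E
  have hamp := h m (E * Eᴴ) hX
  have heq : choi (fun X => Φ X) = ampliate m (fun X => Φ X) (E * Eᴴ) := by
    ext p q
    show (Φ (single p.1 q.1 1)) p.2 q.2
        = (Φ (Matrix.of fun a b => (E * Eᴴ) (p.1, a) (q.1, b))) p.2 q.2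
    have hmat : (single p.1 q.1 (1 : ℂ))
        = Matrix.of fun a b => (E * Eᴴ) (p.1, a) (q.1, b) := by
      ext a b
      simp only [single, of_apply, mul_apply, conjTranspose_apply, hE,
        Fin.sum_univ_one]
      by_cases h1 : p.1 = a <;> by_cases h2 : q.1 = b <;> simp [h1, h2]
    rw [hmat]
  rw [heq]; exact hamp

open Matrix in
lemma choi_to_kraus {m n : ℕ} (Φ : Matrix (Fin m) (Fin m) ℂ →ₗ[ℂ] Matrix (Fin n) (Fin n) ℂ)
    (h : (choi (fun X => Φ X)).PosSemidef) :
    ∃ A : Fin (m * n) → Matrix (Fin n) (Fin m) ℂ,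
      ∀ X : Matrix (Fin m) (Fin m) ℂ, Φ X = ∑ k, A k * X * (A k).conjTranspose := by
  classical
  obtain ⟨B, hB⟩ : ∃ B : Matrix (Fin m × Fin n) (Fin m × Fin n) ℂ, choi (fun X => Φ X) = Bᴴ * B := by
    open scoped MatrixOrder in exact CStarAlgebra.nonneg_iff_eq_star_mul_self.mp h.nonneg
  refine ⟨fun k => Matrix.of fun a i => star (B (finProdFinEquiv.symm k) (i, a)), fun X => ?_⟩
  ext a b
  rw [phi_apply_expand]
  have hC : ∀ (i j : Fin m), (Φ (single i j 1)) a b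
      = ∑ t : Fin m × Fin n, star (B t (i, a)) * B t (j, b) := by
    intro i j
    have : (choi (fun X => Φ X)) (i, a) (j, b) = (Bᴴ * B) (i, a) (j, b) := by rw [hB]
    simpa [choi, mul_apply, conjTranspose_apply] using this
  simp only [hC, Finset.mul_sum]
  rw [sum_rotate]
  rw [Matrix.sum_apply]
  refine Fintype.sum_equiv finProdFinEquiv _ _ fun t => ?_
  simp only [mul_apply, conjTranspose_apply, of_apply, Equiv.symm_apply_apply, star_star,
    Finset.sum_mul]
  exact Finset.sum_congr rfl fun j _ => Finset.sum_congr rfl fun i _ => by ring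
open Matrix in
lemma kraus_to_cp {m n : ℕ} (Φ : Matrix (Fin m) (Fin m) ℂ →ₗ[ℂ] Matrix (Fin n) (Fin n) ℂ)
    (A : Fin (m * n) → Matrix (Fin n) (Fin m) ℂ)
    (hA : ∀ X : Matrix (Fin m) (Fin m) ℂ, Φ X = ∑ k, A k * X * (A k).conjTranspose) :
    CompletelyPositive (fun X => Φ X) := by
  intro K X hX
  classical
  set B : Fin (m * n) → Matrix (Fin K × Fin n) (Fin K × Fin m) ℂ :=
    fun t => Matrix.of fun p q => if p.1 = q.1 then A t p.2 q.2 else 0 with hBdef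
  have heq : ampliate K (fun X => Φ X) X = ∑ t, B t * X * (B t)ᴴ := by
    ext p q
    show (Φ (Matrix.of fun i j => X (p.1, i) (q.1, j))) p.2 q.2 = _
    rw [hA, Matrix.sum_apply, Matrix.sum_apply]
    refine Finset.sum_congr rfl fun t _ => ?_
    simp only [hBdef, mul_apply, conjTranspose_apply, of_apply, Fintype.sum_prod_type,
      apply_ite (star : ℂ → ℂ), star_zero, ite_mul, mul_ite, zero_mul, mul_zero, Finset.sum_ite_eq,
      Finset.sum_ite_eq', Finset.mem_univ, if_true, Finset.sum_ite_irrel,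
      Finset.sum_const_zero, Finset.sum_mul]
  rw [heq]
  exact Finset.sum_induction _ _ (fun a b ha hb => ha.add hb) Matrix.PosSemidef.zero
    (fun t _ => hX.mul_mul_conjTranspose_same _)

/-- A linear map `Φ : M_m → M_n` is completely positive iff its Choi matrix
is positive semidefinite, iff there exist at most `m·n` operators `A_k ∈ M_{n,m}` with
`Φ(X) = Σ_k A_k X A_kᴴ` for all `X`. -/
theorem choi_completely_positive (m n : ℕ)
    (Φ : Matrix (Fin m) (Fin m) ℂ →ₗ[ℂ] Matrix (Fin n) (Fin n) ℂ) :
    (CompletelyPositive (fun X => Φ X) ↔ (choi (fun X => Φ X)).PosSemidef) ∧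
    (CompletelyPositive (fun X => Φ X) ↔
      ∃ A : Fin (m * n) → Matrix (Fin n) (Fin m) ℂ,
        ∀ X : Matrix (Fin m) (Fin m) ℂ, Φ X = ∑ k, A k * X * (A k).conjTranspose) := by
  constructor
  · refine ⟨cp_to_choi Φ, fun h => ?_⟩
    obtain ⟨A, hA⟩ := choi_to_kraus Φ h
    exact kraus_to_cp Φ A hA
  · refine ⟨fun h => choi_to_kraus Φ (cp_to_choi Φ h), fun ⟨A, hA⟩ => kraus_to_cp Φ A hA⟩
end
end

section
/- For any k ≤ n, the map Φ : M_n → M_n defined by Φ(X) = k·Tr(X)·I − X is k-positive; and if k < n, Φ is not (k+1)-positive. -/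
open scoped BigOperators ComplexOrder

noncomputable section

namespace ReductionAux

open Complex Finset

local notation "conj'" => (starRingEnd ℂ)

lemma esum_apply {n : ℕ} {ι : Type*} (s : Finset ι) (f : ι → EuclideanSpace ℂ (Fin n))
    (c : Fin n) : (∑ j ∈ s, f j) c = ∑ j ∈ s, f j c := by
  induction s using Finset.cons_induction with
  | empty => simp [PiLp.zero_apply]
  | cons a s ha ih => simp only [Finset.sum_cons, PiLp.add_apply, ih]

lemma sum4_swap {n d : ℕ} (f : Fin n → Fin n → Fin d → Fin d → ℂ) :
    ∑ p, ∑ q, ∑ t, ∑ s, f p q t s = ∑ t, ∑ s, ∑ p, ∑ q, f p q t s := by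
  calc ∑ p, ∑ q, ∑ t, ∑ s, f p q t s
      = ∑ p, ∑ t, ∑ q, ∑ s, f p q t s :=
        Finset.sum_congr rfl fun p _ => Finset.sum_comm
    _ = ∑ t, ∑ p, ∑ q, ∑ s, f p q t s := Finset.sum_comm
    _ = ∑ t, ∑ p, ∑ s, ∑ q, f p q t s :=
        Finset.sum_congr rfl fun t _ => Finset.sum_congr rfl fun p _ => Finset.sum_comm
    _ = ∑ t, ∑ s, ∑ p, ∑ q, f p q t s :=
        Finset.sum_congr rfl fun t _ => Finset.sum_comm

lemma sum3_rot {α β γ : Type*} [Fintype α] [Fintype β] [Fintype γ] {M : Type*}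
    [AddCommMonoid M] (f : α → β → γ → M) :
    ∑ a, ∑ b, ∑ c, f a b c = ∑ c, ∑ a, ∑ b, f a b c := by
  calc ∑ a, ∑ b, ∑ c, f a b c
      = ∑ a, ∑ c, ∑ b, f a b c := Finset.sum_congr rfl fun _ _ => Finset.sum_comm
    _ = ∑ c, ∑ a, ∑ b, f a b c := Finset.sum_comm

lemma sum4_perm {α β γ δ M : Type*} [Fintype α] [Fintype β] [Fintype γ] [Fintype δ]
    [AddCommMonoid M] (f : α → β → γ → δ → M) :
    ∑ a, ∑ i, ∑ b, ∑ c, f a i b c = ∑ c, ∑ i, ∑ a, ∑ b, f a i b c := by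
  calc ∑ a, ∑ i, ∑ b, ∑ c, f a i b c
      = ∑ a, ∑ i, ∑ c, ∑ b, f a i b c :=
        Finset.sum_congr rfl fun _ _ => Finset.sum_congr rfl fun _ _ => Finset.sum_comm
    _ = ∑ a, ∑ c, ∑ i, ∑ b, f a i b c :=
        Finset.sum_congr rfl fun _ _ => Finset.sum_comm
    _ = ∑ c, ∑ a, ∑ i, ∑ b, f a i b c := Finset.sum_comm
    _ = ∑ c, ∑ i, ∑ a, ∑ b, f a i b c :=
        Finset.sum_congr rfl fun _ _ => Finset.sum_comm

set_option maxHeartbeats 1000000 in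
/-- The key rank inequality: `|Tr(uᵀw)|² ≤ k‖uᵀw‖²` for `k × n` matrices `u`, `w`. -/
lemma key (k n : ℕ) (u w : Fin k → Fin n → ℂ) :
    Complex.normSq (∑ b, ∑ i, u b i * w b i) ≤
      (k : ℝ) * ∑ c, ∑ i, Complex.normSq (∑ b, u b c * w b i) := by
  classical
  set E := EuclideanSpace ℂ (Fin n)
  let r : Fin k → E := fun a => WithLp.toLp 2 (fun c => u a c : Fin n → ℂ)
  let U : Submodule ℂ E := Submodule.span ℂ (Set.range r)
  have hU : Module.finrank ℂ U ≤ k := by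
    simpa [Set.finrank] using (finrank_range_le_card (R := ℂ) r)
  set d := Module.finrank ℂ U with hd
  let b := stdOrthonormalBasis ℂ U
  let A : Matrix (Fin n) (Fin n) ℂ := fun c i => ∑ x, u x c * w x i
  let P : Matrix (Fin n) (Fin n) ℂ := fun p q => ∑ t, (b t : E) p * conj' ((b t : E) q)
  -- columns of A lie in U
  have hcol : ∀ i : Fin n, (WithLp.toLp 2 (fun c => A c i : Fin n → ℂ) : E) ∈ U := by
    intro i
    have : (WithLp.toLp 2 (fun c => A c i : Fin n → ℂ) : E) = ∑ a, w a i • r a := by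
      refine PiLp.ext fun c => ?_
      rw [esum_apply]
      simp only [A, r, PiLp.toLp_apply, PiLp.smul_apply, smul_eq_mul]
      exact Finset.sum_congr rfl fun a _ => mul_comm _ _
    rw [this]
    exact Submodule.sum_mem _ fun a _ =>
      Submodule.smul_mem _ _ (Submodule.subset_span (Set.mem_range_self a))
  -- the projection fixes elements of U
  have hproj : ∀ x : E, x ∈ U → ∀ p : Fin n,
      (∑ t, (b t : E) p * (∑ q, conj' ((b t : E) q) * x q)) = x p := by
    intro x hx p
    have h1 : ∑ t, (b.repr ⟨x, hx⟩ t) • (b t) = (⟨x, hx⟩ : U) := b.sum_repr ⟨x, hx⟩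
    have h2 : ∀ t, b.repr ⟨x, hx⟩ t = ∑ q, conj' ((b t : E) q) * x q := by
      intro t
      rw [b.repr_apply_apply, Submodule.coe_inner, PiLp.inner_apply]
      refine Finset.sum_congr rfl fun q _ => ?_
      simp only [RCLike.inner_apply, Submodule.coe_mk]
      ring
    have h3 := congrArg (fun y : U => (y : E) p) h1
    simp only [AddSubmonoidClass.coe_finset_sum] at h3
    rw [esum_apply] at h3
    simp only [SetLike.val_smul, PiLp.smul_apply, smul_eq_mul] at h3
    rw [← h3]
    refine Finset.sum_congr rfl fun t _ => ?_
    rw [PiLp.smul_apply, smul_eq_mul, h2 t]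
    ring
  -- trace of A equals trace of P * A
  have htr : (∑ p, A p p) = ∑ p, ∑ q, P p q * A q p := by
    refine Finset.sum_congr rfl fun p _ => ?_
    calc A p p = ∑ t, (b t : E) p * (∑ q, conj' ((b t : E) q) * A q p) :=
          (hproj _ (hcol p) p).symm
    _ = ∑ q, P p q * A q p := by
        simp_rw [Finset.mul_sum]
        rw [Finset.sum_comm]
        refine Finset.sum_congr rfl fun q _ => ?_
        simp only [P, Finset.sum_mul]
        exact Finset.sum_congr rfl fun t _ => by ring
  -- Frobenius norm of the projection is √d
  have hP : (∑ p, ∑ q, Complex.normSq (P p q)) = d := by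
    have hortho := orthonormal_iff_ite.mp b.orthonormal
    have hC : ((∑ p, ∑ q, Complex.normSq (P p q) : ℝ) : ℂ) = (d : ℂ) := by
      push_cast
      have e1 : ∀ p q : Fin n, ((Complex.normSq (P p q) : ℝ) : ℂ)
          = ∑ t, ∑ s, ((b t : E) p * conj' ((b s : E) p)) * (conj' ((b t : E) q) * (b s : E) q) := by
        intro p q
        rw [← Complex.mul_conj]
        simp only [P, map_sum, map_mul, Complex.conj_conj, Finset.sum_mul_sum]
        exact Finset.sum_congr rfl fun t _ => Finset.sum_congr rfl fun s _ => by ring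
      calc (∑ p, ∑ q, ((Complex.normSq (P p q) : ℝ) : ℂ))
          = ∑ p, ∑ q, ∑ t, ∑ s,
              ((b t : E) p * conj' ((b s : E) p)) * (conj' ((b t : E) q) * (b s : E) q) := by
            exact Finset.sum_congr rfl fun p _ => Finset.sum_congr rfl fun q _ => e1 p q
        _ = ∑ t, ∑ s, (∑ p, (b t : E) p * conj' ((b s : E) p)) *
              (∑ q, conj' ((b t : E) q) * (b s : E) q) := by
            rw [sum4_swap]
            exact Finset.sum_congr rfl fun t _ => Finset.sum_congr rfl fun s _ =>
              (Finset.sum_mul_sum _ _ _ _).symm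
        _ = ∑ t : Fin d, ∑ s : Fin d,
              (if s = t then (1:ℂ) else 0) * (if t = s then (1:ℂ) else 0) := by
            refine Finset.sum_congr rfl fun t _ => Finset.sum_congr rfl fun s _ => ?_
            have i1 : (∑ p, (b t : E) p * conj' ((b s : E) p)) = if s = t then (1:ℂ) else 0 := by
              rw [← hortho s t, Submodule.coe_inner, PiLp.inner_apply]
              simp only [RCLike.inner_apply]
            have i2 : (∑ q, conj' ((b t : E) q) * (b s : E) q) = if t = s then (1:ℂ) else 0 := by
              rw [← hortho t s, Submodule.coe_inner, PiLp.inner_apply]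
              simp only [RCLike.inner_apply]
              exact Finset.sum_congr rfl fun p _ => by ring
            rw [i1, i2]
        _ = (d : ℂ) := by simp
    exact_mod_cast hC
  -- now the Cauchy–Schwarz step
  have hS : (∑ b', ∑ i, u b' i * w b' i) = ∑ p, A p p := Finset.sum_comm
  rw [hS, htr]
  have flat : (∑ p, ∑ q, P p q * A q p)
      = ∑ x : Fin n × Fin n, P x.1 x.2 * A x.2 x.1 := by
    rw [Fintype.sum_prod_type]
  rw [flat]
  have habs : ‖∑ x : Fin n × Fin n, P x.1 x.2 * A x.2 x.1‖
      ≤ ∑ x : Fin n × Fin n, ‖P x.1 x.2‖ * ‖A x.2 x.1‖ := by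
    refine (norm_sum_le _ _).trans ?_
    exact le_of_eq (Finset.sum_congr rfl fun x _ => Complex.norm_mul _ _)
  have hsq : Complex.normSq (∑ x : Fin n × Fin n, P x.1 x.2 * A x.2 x.1)
      ≤ (∑ x : Fin n × Fin n, ‖P x.1 x.2‖ * ‖A x.2 x.1‖) ^ 2 := by
    rw [← Complex.sq_norm]
    exact pow_le_pow_left₀ (norm_nonneg _) habs 2
  have hcs := Finset.sum_mul_sq_le_sq_mul_sq Finset.univ
    (fun x : Fin n × Fin n => ‖P x.1 x.2‖)
    (fun x : Fin n × Fin n => ‖A x.2 x.1‖)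
  have e2 : (∑ x : Fin n × Fin n, ‖P x.1 x.2‖ ^ 2) = d := by
    rw [← hP, Fintype.sum_prod_type]
    exact Finset.sum_congr rfl fun p _ => Finset.sum_congr rfl fun q _ => Complex.sq_norm _
  have e3 : (∑ x : Fin n × Fin n, ‖A x.2 x.1‖ ^ 2)
      = ∑ c, ∑ i, Complex.normSq (A c i) := by
    rw [Fintype.sum_prod_type]
    rw [Finset.sum_comm]
    exact Finset.sum_congr rfl fun c _ => Finset.sum_congr rfl fun i _ => Complex.sq_norm _
  have hnn : (0:ℝ) ≤ ∑ c, ∑ i, Complex.normSq (A c i) :=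
    Finset.sum_nonneg fun c _ => Finset.sum_nonneg fun i _ => Complex.normSq_nonneg _
  calc Complex.normSq (∑ x : Fin n × Fin n, P x.1 x.2 * A x.2 x.1)
      ≤ (∑ x : Fin n × Fin n, ‖P x.1 x.2‖ ^ 2) *
        (∑ x : Fin n × Fin n, ‖A x.2 x.1‖ ^ 2) := hsq.trans hcs
    _ = (d : ℝ) * ∑ c, ∑ i, Complex.normSq (A c i) := by rw [e2, e3]
    _ ≤ (k : ℝ) * ∑ c, ∑ i, Complex.normSq (A c i) :=
        mul_le_mul_of_nonneg_right (by exact_mod_cast hU) hnn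

set_option maxHeartbeats 2000000 in
/-- Expansion of the quadratic form of the ampliated reduction-type map. -/
lemma expand (K n k : ℕ) (X : Matrix (Fin K × Fin n) (Fin K × Fin n) ℂ) (w : Fin K × Fin n → ℂ) :
    dotProduct (star w) ((ampliate K (fun Y : Matrix (Fin n) (Fin n) ℂ =>
        ((k : ℂ) * Y.trace) • (1 : Matrix (Fin n) (Fin n) ℂ) - Y) X).mulVec w)
      = (k:ℂ) * (∑ c, ∑ i, ∑ a, ∑ b, (starRingEnd ℂ) (w (a,i)) * X (a,c) (b,c) * w (b,i))
        - ∑ a, ∑ i, ∑ b, ∑ j, (starRingEnd ℂ) (w (a,i)) * X (a,i) (b,j) * w (b,j) := by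
  simp only [dotProduct, Matrix.mulVec, ampliate, Matrix.of_apply, Matrix.sub_apply,
    Matrix.smul_apply, Matrix.one_apply, Matrix.trace, Matrix.diag, smul_eq_mul,
    Pi.star_apply, RCLike.star_def]
  rw [Fintype.sum_prod_type]
  have inner_eq : ∀ (a : Fin K) (i : Fin n),
      (∑ q : Fin K × Fin n, ((k:ℂ) * (∑ c, X (a,c) (q.1,c)) * (if i = q.2 then 1 else 0)
          - X (a,i) q) * w q)
      = (k:ℂ) * (∑ b, (∑ c, X (a,c) (b,c)) * w (b,i)) - ∑ b, ∑ j, X (a,i) (b,j) * w (b,j) := by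
    intro a i
    rw [Fintype.sum_prod_type]
    simp only [sub_mul, Finset.sum_sub_distrib]
    congr 1
    · rw [Finset.mul_sum]
      refine Finset.sum_congr rfl fun x _ => ?_
      simp only [mul_ite, ite_mul, mul_one, mul_zero, zero_mul, Finset.sum_ite_eq,
        Finset.mem_univ, if_true]
      ring
  simp only [inner_eq]
  simp only [mul_sub, Finset.sum_sub_distrib, Finset.mul_sum]
  congr 1
  · simp only [Finset.sum_mul, Finset.mul_sum]
    rw [sum4_perm]
    refine Finset.sum_congr rfl fun c _ => Finset.sum_congr rfl fun i _ =>
      Finset.sum_congr rfl fun a _ => Finset.sum_congr rfl fun b _ => by ring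
  · refine Finset.sum_congr rfl fun a _ => Finset.sum_congr rfl fun i _ =>
      Finset.sum_congr rfl fun b _ => Finset.sum_congr rfl fun j _ => by ring

lemma sum4_pairswap {α β : Type*} [Fintype α] [Fintype β] (f : α → β → α → β → ℂ) :
    ∑ a, ∑ i, ∑ b, ∑ j, f a i b j = ∑ a, ∑ i, ∑ b, ∑ j, f b j a i := by
  calc ∑ a, ∑ i, ∑ b, ∑ j, f a i b j
      = ∑ a, ∑ b, ∑ i, ∑ j, f a i b j :=
        Finset.sum_congr rfl fun _ _ => Finset.sum_comm
    _ = ∑ b, ∑ a, ∑ i, ∑ j, f a i b j := Finset.sum_comm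
    _ = ∑ b, ∑ j, ∑ a, ∑ i, f a i b j :=
        Finset.sum_congr rfl fun _ _ => sum3_rot _
    _ = ∑ a, ∑ i, ∑ b, ∑ j, f b j a i := rfl

lemma part1 (n k : ℕ) :
    kPositive k (fun X : Matrix (Fin n) (Fin n) ℂ =>
      ((k : ℂ) * X.trace) • (1 : Matrix (Fin n) (Fin n) ℂ) - X) := by
  intro X hX
  obtain ⟨B, hB⟩ : ∃ B : Matrix (Fin k × Fin n) (Fin k × Fin n) ℂ, X = B.conjTranspose * B := by
    classical
    open MatrixOrder in
    obtain ⟨Y, hY, -, hYY⟩ := CFC.exists_sqrt_of_isSelfAdjoint_of_quasispectrumRestricts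
      hX.isHermitian (QuasispectrumRestricts.nnreal_of_nonneg hX.nonneg)
    have h2 : Y.conjTranspose = Y := hY.star_eq
    exact ⟨Y, by rw [h2, ← hYY]⟩
  have hXapp : ∀ p q, X p q = ∑ r, (starRingEnd ℂ) (B r p) * B r q := by
    intro p q
    rw [hB, Matrix.mul_apply]
    simp [Matrix.conjTranspose_apply]
  refine Matrix.PosSemidef.of_dotProduct_mulVec_nonneg ?_ ?_
  · -- Hermitian part
    refine Matrix.IsHermitian.ext fun p q => ?_
    obtain ⟨a, i⟩ := p; obtain ⟨b, j⟩ := q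
    show star (ampliate k _ X (b,j) (a,i)) = _
    simp only [ampliate, Matrix.of_apply, Matrix.sub_apply, Matrix.smul_apply, Matrix.one_apply,
      Matrix.trace, Matrix.diag, smul_eq_mul, RCLike.star_def, map_sub, map_mul, map_sum,
      map_natCast]
    have hXh : ∀ p q, (starRingEnd ℂ) (X p q) = X q p := fun p q => hX.1.apply q p
    simp only [hXh]
    congr 1
    rw [apply_ite (starRingEnd ℂ), map_one, map_zero]
    congr 1
    exact if_congr eq_comm rfl rfl
  · intro w
    rw [expand k n k X w]
    simp only [hXapp]
    set A : (Fin k × Fin n) → Fin n → Fin n → ℂ :=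
      fun r c i => ∑ b', B r (b',c) * w (b',i) with hA
    set S : (Fin k × Fin n) → ℂ := fun r => ∑ b', ∑ j, B r (b',j) * w (b',j) with hS
    have e1 : (∑ c, ∑ i, ∑ a, ∑ b, (starRingEnd ℂ) (w (a,i)) *
          (∑ r, (starRingEnd ℂ) (B r (a,c)) * B r (b,c)) * w (b,i))
        = ∑ r, ∑ c, ∑ i, (starRingEnd ℂ) (A r c i) * A r c i := by
      have percl : ∀ c i : Fin n, (∑ a, ∑ b, (starRingEnd ℂ) (w (a,i)) *
            (∑ r, (starRingEnd ℂ) (B r (a,c)) * B r (b,c)) * w (b,i))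
          = ∑ r, (starRingEnd ℂ) (A r c i) * A r c i := by
        intro c i
        calc (∑ a, ∑ b, (starRingEnd ℂ) (w (a,i)) *
              (∑ r, (starRingEnd ℂ) (B r (a,c)) * B r (b,c)) * w (b,i))
            = ∑ a, ∑ b, ∑ r, ((starRingEnd ℂ) (B r (a,c)) * (starRingEnd ℂ) (w (a,i))) *
                (B r (b,c) * w (b,i)) := by
              refine Finset.sum_congr rfl fun a _ => Finset.sum_congr rfl fun b _ => ?_
              rw [Finset.mul_sum, Finset.sum_mul]
              exact Finset.sum_congr rfl fun r _ => by ring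
          _ = ∑ r, ∑ a, ∑ b, ((starRingEnd ℂ) (B r (a,c)) * (starRingEnd ℂ) (w (a,i))) *
                (B r (b,c) * w (b,i)) := sum3_rot _
          _ = ∑ r, (∑ a, (starRingEnd ℂ) (B r (a,c)) * (starRingEnd ℂ) (w (a,i))) *
                (∑ b, B r (b,c) * w (b,i)) :=
              Finset.sum_congr rfl fun r _ => (Finset.sum_mul_sum _ _ _ _).symm
          _ = ∑ r, (starRingEnd ℂ) (A r c i) * A r c i := by
              refine Finset.sum_congr rfl fun r _ => ?_
              rw [hA]
              simp only [map_sum, map_mul]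
      calc (∑ c, ∑ i, ∑ a, ∑ b, (starRingEnd ℂ) (w (a,i)) *
            (∑ r, (starRingEnd ℂ) (B r (a,c)) * B r (b,c)) * w (b,i))
          = ∑ c, ∑ i, ∑ r, (starRingEnd ℂ) (A r c i) * A r c i :=
            Finset.sum_congr rfl fun c _ => Finset.sum_congr rfl fun i _ => percl c i
        _ = ∑ r, ∑ c, ∑ i, (starRingEnd ℂ) (A r c i) * A r c i := sum3_rot _
    have e2 : (∑ a, ∑ i, ∑ b, ∑ j, (starRingEnd ℂ) (w (a,i)) *
          (∑ r, (starRingEnd ℂ) (B r (a,i)) * B r (b,j)) * w (b,j))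
        = ∑ r, (starRingEnd ℂ) (S r) * S r := by
      calc (∑ a, ∑ i, ∑ b, ∑ j, (starRingEnd ℂ) (w (a,i)) *
            (∑ r, (starRingEnd ℂ) (B r (a,i)) * B r (b,j)) * w (b,j))
          = ∑ a, ∑ i, ∑ b, ∑ j, ∑ r, ((starRingEnd ℂ) (B r (a,i)) * (starRingEnd ℂ) (w (a,i))) *
              (B r (b,j) * w (b,j)) := by
            refine Finset.sum_congr rfl fun a _ => Finset.sum_congr rfl fun i _ =>
              Finset.sum_congr rfl fun b _ => Finset.sum_congr rfl fun j _ => ?_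
            rw [Finset.mul_sum, Finset.sum_mul]
            exact Finset.sum_congr rfl fun r _ => by ring
        _ = ∑ a, ∑ i, ∑ r, ∑ b, ∑ j, ((starRingEnd ℂ) (B r (a,i)) * (starRingEnd ℂ) (w (a,i))) *
              (B r (b,j) * w (b,j)) :=
            Finset.sum_congr rfl fun a _ => Finset.sum_congr rfl fun i _ => sum3_rot _
        _ = ∑ r, ∑ a, ∑ i, ∑ b, ∑ j, ((starRingEnd ℂ) (B r (a,i)) * (starRingEnd ℂ) (w (a,i))) *
              (B r (b,j) * w (b,j)) :=
            sum3_rot (f := fun (a : Fin k) (i : Fin n) r => ∑ b, ∑ j,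
              ((starRingEnd ℂ) (B r (a,i)) * (starRingEnd ℂ) (w (a,i))) * (B r (b,j) * w (b,j)))
        _ = ∑ r, (starRingEnd ℂ) (S r) * S r := by
            refine Finset.sum_congr rfl fun r _ => ?_
            rw [hS]
            simp only [map_sum, map_mul, Finset.sum_mul, Finset.mul_sum]
            rw [sum4_pairswap]
    rw [e1, e2]
    have hcast : ((k:ℂ) * ∑ r, ∑ c, ∑ i, (starRingEnd ℂ) (A r c i) * A r c i)
        - (∑ r, (starRingEnd ℂ) (S r) * S r)
        = ((∑ r, ((k:ℝ) * (∑ c, ∑ i, Complex.normSq (A r c i)) - Complex.normSq (S r)) : ℝ) : ℂ) := by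
      simp_rw [← Complex.normSq_eq_conj_mul_self]
      push_cast
      rw [Finset.mul_sum, ← Finset.sum_sub_distrib]
    rw [hcast, Complex.zero_le_real]
    refine Finset.sum_nonneg fun r _ => ?_
    rw [sub_nonneg]
    exact key k n (fun b' c => B r (b', c)) (fun b' i => w (b', i))

lemma part2 (n k : ℕ) (hkn : k < n) :
    ¬ kPositive (k + 1) (fun X : Matrix (Fin n) (Fin n) ℂ =>
      ((k : ℂ) * X.trace) • (1 : Matrix (Fin n) (Fin n) ℂ) - X) := by
  intro H
  have hk1 : k + 1 ≤ n := hkn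
  set v : Fin (k+1) × Fin n → ℂ := fun p => if (p.2 : ℕ) = (p.1 : ℕ) then 1 else 0 with hv
  set X : Matrix (Fin (k+1) × Fin n) (Fin (k+1) × Fin n) ℂ :=
    Matrix.of fun p q => (starRingEnd ℂ) (v p) * v q with hXdef
  have hconj : ∀ p, (starRingEnd ℂ) (v p) = v p := by
    intro p; rw [hv]; simp only; split <;> simp
  have hsq : ∀ p, v p * v p = v p := by
    intro p; rw [hv]; simp only; split <;> simp
  have hXPSD : X.PosSemidef := by
    refine Matrix.PosSemidef.of_dotProduct_mulVec_nonneg ?_ ?_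
    · refine Matrix.IsHermitian.ext fun p q => ?_
      show (starRingEnd ℂ) (X q p) = X p q
      simp only [hXdef, Matrix.of_apply, map_mul, hconj, Complex.conj_conj]
      ring
    · intro y
      have hq : dotProduct (star y) (X.mulVec y)
          = (starRingEnd ℂ) (∑ q, v q * y q) * (∑ q, v q * y q) := by
        simp only [dotProduct, Matrix.mulVec, hXdef, Matrix.of_apply, Pi.star_apply,
          RCLike.star_def]
        rw [map_sum, Finset.sum_mul]
        refine Finset.sum_congr rfl fun p _ => ?_
        rw [map_mul, Finset.mul_sum, Finset.mul_sum]
        refine Finset.sum_congr rfl fun q _ => by ring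
      rw [hq, ← Complex.normSq_eq_conj_mul_self, Complex.zero_le_real]
      exact Complex.normSq_nonneg _
  have h0 := (H X hXPSD).dotProduct_mulVec_nonneg v
  rw [expand (k+1) n k X v] at h0
  -- the all-ones-row sums
  have hone : ∀ a : Fin (k+1), (∑ i : Fin n, v (a, i)) = 1 := by
    intro a
    have ha : (a : ℕ) < n := lt_of_lt_of_le a.isLt hk1
    rw [hv]; simp only
    rw [Finset.sum_eq_single (⟨(a:ℕ), ha⟩ : Fin n)]
    · simp
    · intro i _ hne
      rw [if_neg]
      intro hh; exact hne (Fin.ext hh)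
    · intro h; exact absurd (Finset.mem_univ _) h
  have hone2 : ∀ c : Fin n, (∑ a : Fin (k+1), v (a, c))
      = if (c : ℕ) < k+1 then 1 else 0 := by
    intro c
    by_cases hlt : (c : ℕ) < k + 1
    · rw [if_pos hlt]
      rw [Finset.sum_eq_single (⟨(c:ℕ), hlt⟩ : Fin (k+1))]
      · rw [hv]; simp
      · intro a _ hne
        rw [hv]; simp only
        rw [if_neg]
        intro hh; exact hne (Fin.ext hh.symm)
      · intro h; exact absurd (Finset.mem_univ _) h
    · rw [if_neg hlt]
      refine Finset.sum_eq_zero fun a _ => ?_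
      rw [hv]; simp only
      rw [if_neg]
      intro hh; exact hlt (hh ▸ a.isLt)
  -- the Gram-type sum
  have hg : ∀ c i : Fin n, (∑ a : Fin (k+1), v (a,i) * v (a,c))
      = if ((c:ℕ) = (i:ℕ) ∧ (c:ℕ) < k+1) then 1 else 0 := by
    intro c i
    by_cases hci : (c:ℕ) = (i:ℕ)
    · by_cases hlt : (c:ℕ) < k+1
      · rw [if_pos ⟨hci, hlt⟩]
        rw [Finset.sum_eq_single (⟨(c:ℕ), hlt⟩ : Fin (k+1))]
        · rw [hv]; simp [hci.symm]
        · intro a _ hne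
          rw [hv]; simp only
          refine mul_eq_zero_of_right _ ?_
          rw [if_neg]
          intro hh; exact hne (Fin.ext hh.symm)
        · intro h; exact absurd (Finset.mem_univ _) h
      · rw [if_neg (by tauto)]
        refine Finset.sum_eq_zero fun a _ => ?_
        rw [hv]; simp only
        refine mul_eq_zero_of_right _ ?_
        rw [if_neg]
        intro hh; exact hlt (hh ▸ a.isLt)
    · rw [if_neg (by tauto)]
      refine Finset.sum_eq_zero fun a _ => ?_
      rw [hv]; simp only
      by_cases hia : (i:ℕ) = (a:ℕ)
      · refine mul_eq_zero_of_right _ ?_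
        rw [if_neg]
        intro hh; exact hci (by omega)
      · exact mul_eq_zero_of_left (by rw [if_neg hia]) _
  -- compute the second (big) term
  have hT2 : (∑ a, ∑ i, ∑ b, ∑ j, (starRingEnd ℂ) (v (a,i)) * X (a,i) (b,j) * v (b,j))
      = ((k:ℂ)+1) * ((k:ℂ)+1) := by
    calc (∑ a, ∑ i, ∑ b, ∑ j, (starRingEnd ℂ) (v (a,i)) * X (a,i) (b,j) * v (b,j))
        = ∑ a, ∑ i, ∑ b, ∑ j, v (a,i) * v (b,j) := by
          refine Finset.sum_congr rfl fun a _ => Finset.sum_congr rfl fun i _ =>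
            Finset.sum_congr rfl fun b _ => Finset.sum_congr rfl fun j _ => ?_
          simp only [hXdef, Matrix.of_apply, hconj]
          rw [show v (a,i) * (v (a,i) * v (b,j)) * v (b,j)
              = (v (a,i) * v (a,i)) * (v (b,j) * v (b,j)) from by ring, hsq, hsq]
      _ = (∑ a, ∑ i, v (a,i)) * (∑ b, ∑ j, v (b,j)) := by
          symm
          calc (∑ a, ∑ i, v (a,i)) * (∑ b, ∑ j, v (b,j))
              = ∑ a, ∑ b, (∑ i, v (a,i)) * (∑ j, v (b,j)) := Finset.sum_mul_sum _ _ _ _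
            _ = ∑ a, ∑ b, ∑ i, ∑ j, v (a,i) * v (b,j) :=
                Finset.sum_congr rfl fun a _ => Finset.sum_congr rfl fun b _ =>
                  Finset.sum_mul_sum _ _ _ _
            _ = ∑ a, ∑ i, ∑ b, ∑ j, v (a,i) * v (b,j) :=
                Finset.sum_congr rfl fun a _ => Finset.sum_comm
      _ = ((k:ℂ)+1) * ((k:ℂ)+1) := by
          simp only [hone, Finset.sum_const, Finset.card_univ, Fintype.card_fin, nsmul_eq_mul,
            mul_one]
          push_cast
          ring
  -- compute the first term
  have hT1 : (∑ c, ∑ i, ∑ a, ∑ b, (starRingEnd ℂ) (v (a,i)) * X (a,c) (b,c) * v (b,i))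
      = (k:ℂ)+1 := by
    calc (∑ c, ∑ i, ∑ a, ∑ b, (starRingEnd ℂ) (v (a,i)) * X (a,c) (b,c) * v (b,i))
        = ∑ c, ∑ i, ∑ a, ∑ b, (v (a,i) * v (a,c)) * (v (b,i) * v (b,c)) := by
          refine Finset.sum_congr rfl fun c _ => Finset.sum_congr rfl fun i _ =>
            Finset.sum_congr rfl fun a _ => Finset.sum_congr rfl fun b _ => ?_
          simp only [hXdef, Matrix.of_apply, hconj]
          ring
      _ = ∑ c, ∑ i, (∑ a, v (a,i) * v (a,c)) * (∑ b, v (b,i) * v (b,c)) :=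
          Finset.sum_congr rfl fun c _ => Finset.sum_congr rfl fun i _ =>
            (Finset.sum_mul_sum _ _ _ _).symm
      _ = ∑ c : Fin n, ∑ i : Fin n, (if ((c:ℕ) = (i:ℕ) ∧ (c:ℕ) < k+1) then (1:ℂ) else 0) := by
          refine Finset.sum_congr rfl fun c _ => Finset.sum_congr rfl fun i _ => ?_
          rw [hg c i]
          split <;> simp
      _ = ∑ c : Fin n, (if (c:ℕ) < k+1 then (1:ℂ) else 0) := by
          refine Finset.sum_congr rfl fun c _ => ?_
          by_cases hlt : (c:ℕ) < k+1
          · rw [if_pos hlt, Finset.sum_eq_single c]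
            · rw [if_pos ⟨rfl, hlt⟩]
            · intro i _ hne
              rw [if_neg]
              rintro ⟨h1, _⟩; exact hne (Fin.ext h1.symm)
            · intro h; exact absurd (Finset.mem_univ _) h
          · rw [if_neg hlt]
            exact Finset.sum_eq_zero fun i _ => if_neg (by tauto)
      _ = ∑ c : Fin n, ∑ a : Fin (k+1), v (a, c) := by
          refine Finset.sum_congr rfl fun c _ => ?_
          rw [hone2 c]
      _ = ∑ a : Fin (k+1), ∑ c : Fin n, v (a, c) := Finset.sum_comm
      _ = (k:ℂ)+1 := by
          simp only [hone, Finset.sum_const, Finset.card_univ, Fintype.card_fin, nsmul_eq_mul,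
            mul_one]
          push_cast
          ring
  rw [hT1, hT2] at h0
  have hneg : (k:ℂ) * ((k:ℂ)+1) - ((k:ℂ)+1) * ((k:ℂ)+1) = ((-(1:ℝ) - k : ℝ) : ℂ) := by
    push_cast
    ring
  rw [hneg, Complex.zero_le_real] at h0
  have hkpos : (0:ℝ) ≤ (k:ℝ) := Nat.cast_nonneg k
  linarith

end ReductionAux

open ReductionAux Complex Finset in
/-- For any `k ≤ n`, the map `Φ(X) = k·Tr(X)·I − X` on `M_n` is `k`-positive;
and if `k < n`, then `Φ` is not `(k+1)`-positive. -/
theorem reduction_type_map_k_positive (n k : ℕ) (hk : k ≤ n) :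
    kPositive k (fun X : Matrix (Fin n) (Fin n) ℂ =>
      ((k : ℂ) * X.trace) • (1 : Matrix (Fin n) (Fin n) ℂ) - X) ∧
    (k < n → ¬ kPositive (k + 1) (fun X : Matrix (Fin n) (Fin n) ℂ =>
      ((k : ℂ) * X.trace) • (1 : Matrix (Fin n) (Fin n) ℂ) - X)) := by
  exact ⟨part1 n k, fun hkn => part2 n k hkn⟩
end
end

section
/- If X ∈ M_m ⊗ M_n is positive semidefinite, then ‖X‖_{S(k)} = sup{ ⟨v|X|v⟩ : ‖v‖ = 1, SR(v) ≤ k }; that is, for positive semidefinite operators the supremum defining the S(k)-norm may be restricted to the diagonal case v = w. -/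
open scoped BigOperators

noncomputable section

open scoped ComplexOrder

section Aux

variable {ι : Type} [Fintype ι]

lemma ip_conjT (A : Matrix ι ι ℂ) (w u : ι → ℂ) :
    ip w (A.conjTranspose.mulVec u) = ip (A.mulVec w) u := by
  simp only [ip, Matrix.mulVec, dotProduct, Matrix.conjTranspose_apply,
    Finset.mul_sum, Finset.sum_mul, map_sum, map_mul]
  rw [Finset.sum_comm]
  refine Finset.sum_congr rfl fun j _ => Finset.sum_congr rfl fun i _ => by simp only [starRingEnd_apply]; ring

lemma abs_ip_le_prod (a b : ι → ℂ) :
    ‖ip a b‖ ≤ ∑ i, ‖a i‖ * ‖b i‖ := by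
  refine le_trans (norm_sum_le _ _) (le_of_eq ?_)
  exact Finset.sum_congr rfl fun i _ => by rw [norm_mul, Complex.norm_conj]

lemma abs_ip_le (a b : ι → ℂ) : ‖ip a b‖ ≤ nrm a * nrm b := by
  have hsum : (0:ℝ) ≤ ∑ i, ‖a i‖ * ‖b i‖ :=
    Finset.sum_nonneg fun i _ => mul_nonneg (norm_nonneg _) (norm_nonneg _)
  have h2 := Finset.sum_mul_sq_le_sq_mul_sq Finset.univ
    (fun i => ‖a i‖) (fun i => ‖b i‖)
  have h3 : ∀ c : ι → ℂ, ∑ i, ‖c i‖ ^ 2 = ∑ i, Complex.normSq (c i) := by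
    intro c; exact Finset.sum_congr rfl fun i _ => Complex.sq_norm _
  calc ‖ip a b‖ ≤ ∑ i, ‖a i‖ * ‖b i‖ := abs_ip_le_prod a b
    _ = Real.sqrt ((∑ i, ‖a i‖ * ‖b i‖) ^ 2) :=
        (Real.sqrt_sq hsum).symm
    _ ≤ Real.sqrt ((∑ i, ‖a i‖ ^ 2) * ∑ i, ‖b i‖ ^ 2) :=
        Real.sqrt_le_sqrt h2
    _ = nrm a * nrm b := by
        rw [Real.sqrt_mul (Finset.sum_nonneg fun i _ => sq_nonneg _), nrm, nrm, h3, h3]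

lemma ip_self_eq (u : ι → ℂ) : ip u u = ((∑ i, Complex.normSq (u i) : ℝ) : ℂ) := by
  rw [ip]
  push_cast
  exact Finset.sum_congr rfl fun i _ => by rw [mul_comm, Complex.mul_conj]

lemma ip_self_eq_nrm_sq (u : ι → ℂ) : ip u u = ((nrm u ^ 2 : ℝ) : ℂ) := by
  rw [ip_self_eq, nrm, Real.sq_sqrt (Finset.sum_nonneg fun i _ => Complex.normSq_nonneg _)]

lemma abs_entry_le_one {u : ι → ℂ} (hu : nrm u = 1) (i : ι) : ‖u i‖ ≤ 1 := by
  have hs : ∑ j, Complex.normSq (u j) = 1 := Real.sqrt_eq_one.mp hu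
  have h1 : Complex.normSq (u i) ≤ 1 :=
    hs ▸ Finset.single_le_sum (fun j _ => Complex.normSq_nonneg (u j)) (Finset.mem_univ i)
  rw [Complex.norm_def]
  exact Real.sqrt_le_one.mpr h1

lemma abs_ip_X_le (X : Matrix ι ι ℂ) {v w : ι → ℂ} (hv : nrm v = 1) (hw : nrm w = 1) :
    ‖ip w (X.mulVec v)‖ ≤ ∑ i, ∑ j, ‖X i j‖ := by
  calc ‖ip w (X.mulVec v)‖
      ≤ ∑ i, ‖w i‖ * ‖X.mulVec v i‖ := abs_ip_le_prod _ _
    _ ≤ ∑ i, ‖X.mulVec v i‖ := Finset.sum_le_sum fun i _ =>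
        mul_le_of_le_one_left (norm_nonneg _) (abs_entry_le_one hw i)
    _ ≤ ∑ i, ∑ j, ‖X i j‖ := by
        refine Finset.sum_le_sum fun i _ => ?_
        calc ‖X.mulVec v i‖ = ‖∑ j, X i j * v j‖ := by
              simp [Matrix.mulVec, dotProduct]
          _ ≤ ∑ j, ‖X i j * v j‖ := norm_sum_le _ _
          _ ≤ ∑ j, ‖X i j‖ := Finset.sum_le_sum fun j _ => by
              rw [norm_mul]
              exact mul_le_of_le_one_right (norm_nonneg _) (abs_entry_le_one hv j)

end Aux

/-- If `X ∈ M_m ⊗ M_n` is positive semidefinite, then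
`‖X‖_{S(k)} = sup{ ⟨v|X|v⟩ : ‖v‖ = 1, SR(v) ≤ k }`: the supremum defining the `S(k)`-norm
may be restricted to the diagonal case `v = w`. -/
theorem Snorm_psd_diagonal (m n k : ℕ)
    (X : Matrix (Fin m × Fin n) (Fin m × Fin n) ℂ) (hX : X.PosSemidef) :
    Snorm k X =
      sSup { r : ℝ | ∃ v : Fin m × Fin n → ℂ,
        nrm v = 1 ∧ SRle k v ∧ r = (ip v (X.mulVec v)).re } := by
  set S : Set ℝ := { r : ℝ | ∃ v w : Fin m × Fin n → ℂ, nrm v = 1 ∧ nrm w = 1 ∧ SRle k v ∧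
    SRle k w ∧ r = ‖ip w (X.mulVec v)‖ } with hSdef
  set D : Set ℝ := { r : ℝ | ∃ v : Fin m × Fin n → ℂ,
    nrm v = 1 ∧ SRle k v ∧ r = (ip v (X.mulVec v)).re } with hDdef
  have hSn : Snorm k X = sSup S := rfl
  rw [hSn]
  by_cases hex : ∃ v : Fin m × Fin n → ℂ, nrm v = 1 ∧ SRle k v
  · obtain ⟨v₀, hv₀1, hv₀2⟩ := hex
    obtain ⟨B, hB⟩ : ∃ B : Matrix (Fin m × Fin n) (Fin m × Fin n) ℂ, X = B.conjTranspose * B := by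
      open scoped MatrixOrder in exact CStarAlgebra.nonneg_iff_eq_star_mul_self.mp hX.nonneg
    have key : ∀ v w : Fin m × Fin n → ℂ,
        ip w (X.mulVec v) = ip (B.mulVec w) (B.mulVec v) := by
      intro v w
      rw [hB, ← Matrix.mulVec_mulVec, ip_conjT]
    have diag : ∀ v : Fin m × Fin n → ℂ,
        ip v (X.mulVec v) = ((nrm (B.mulVec v) ^ 2 : ℝ) : ℂ) := by
      intro v; rw [key, ip_self_eq_nrm_sq]
    have diag_re : ∀ v : Fin m × Fin n → ℂ,
        (ip v (X.mulVec v)).re = nrm (B.mulVec v) ^ 2 := by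
      intro v; rw [diag, Complex.ofReal_re]
    have diag_abs : ∀ v : Fin m × Fin n → ℂ,
        ‖ip v (X.mulVec v)‖ = nrm (B.mulVec v) ^ 2 := by
      intro v; rw [diag, Complex.norm_real, Real.norm_eq_abs, abs_of_nonneg (sq_nonneg _)]
    set C : ℝ := ∑ i, ∑ j, ‖X i j‖ with hC
    have hSbdd : BddAbove S := by
      refine ⟨C, fun r hr => ?_⟩
      obtain ⟨v, w, h1, h2, _, _, h5⟩ := hr
      exact h5 ▸ abs_ip_X_le X h1 h2
    have hDbdd : BddAbove D := by
      refine ⟨C, fun r hr => ?_⟩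
      obtain ⟨v, h1, _, h3⟩ := hr
      exact h3 ▸ (Complex.re_le_norm _).trans (abs_ip_X_le X h1 h1)
    have hDne : D.Nonempty := ⟨_, v₀, hv₀1, hv₀2, rfl⟩
    have hSne : S.Nonempty := ⟨_, v₀, v₀, hv₀1, hv₀1, hv₀2, hv₀2, rfl⟩
    have hM0 : 0 ≤ sSup D := by
      have hmem : (ip v₀ (X.mulVec v₀)).re ∈ D := ⟨v₀, hv₀1, hv₀2, rfl⟩
      have h := le_csSup hDbdd hmem
      rw [diag_re] at h
      exact le_trans (sq_nonneg _) h
    apply le_antisymm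
    · refine csSup_le hSne fun r hr => ?_
      obtain ⟨v, w, h1, h2, h3, h4, h5⟩ := hr
      have hvD : nrm (B.mulVec v) ^ 2 ≤ sSup D :=
        le_csSup hDbdd ⟨v, h1, h3, (diag_re v).symm⟩
      have hwD : nrm (B.mulVec w) ^ 2 ≤ sSup D :=
        le_csSup hDbdd ⟨w, h2, h4, (diag_re w).symm⟩
      have hnn : ∀ u : Fin m × Fin n → ℂ, 0 ≤ nrm u := fun u => Real.sqrt_nonneg _
      have hbv : nrm (B.mulVec v) ≤ Real.sqrt (sSup D) := by
        rw [← Real.sqrt_sq (hnn (B.mulVec v))]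
        exact Real.sqrt_le_sqrt hvD
      have hbw : nrm (B.mulVec w) ≤ Real.sqrt (sSup D) := by
        rw [← Real.sqrt_sq (hnn (B.mulVec w))]
        exact Real.sqrt_le_sqrt hwD
      calc r = ‖ip (B.mulVec w) (B.mulVec v)‖ := by rw [h5, key]
        _ ≤ nrm (B.mulVec w) * nrm (B.mulVec v) := abs_ip_le _ _
        _ ≤ Real.sqrt (sSup D) * Real.sqrt (sSup D) :=
            mul_le_mul hbw hbv (hnn _) (Real.sqrt_nonneg _)
        _ = sSup D := Real.mul_self_sqrt hM0
    · refine csSup_le hDne fun r hr => ?_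
      obtain ⟨v, h1, h2, h3⟩ := hr
      refine le_csSup hSbdd ⟨v, v, h1, h1, h2, h2, ?_⟩
      rw [h3, diag_re, diag_abs]
  · have hS : S = ∅ := Set.eq_empty_iff_forall_notMem.mpr fun r hr => by
      obtain ⟨v, _, h1, _, h3, _, _⟩ := hr
      exact hex ⟨v, h1, h3⟩
    have hD : D = ∅ := Set.eq_empty_iff_forall_notMem.mpr fun r hr => by
      obtain ⟨v, h1, h2, _⟩ := hr
      exact hex ⟨v, h1, h2⟩
    rw [hS, hD]
end
end

section
/- If P ∈ M_m ⊗ M_n is an orthogonal projection, then ‖P‖_{S(k)} = sup{ ‖v‖_{s(k)}² : v a unit vector in the range of P }. -/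
open scoped BigOperators

noncomputable section

section Aux

variable {ι : Type} [Fintype ι]

lemma aux_ip_inner (w v : ι → ℂ) : ip w v = @inner ℂ (EuclideanSpace ℂ ι) _ (WithLp.toLp 2 w) (WithLp.toLp 2 v) := by
  simp [ip, PiLp.inner_apply, RCLike.inner_apply, mul_comm]

lemma aux_nrm_norm (v : ι → ℂ) : nrm v = @norm (EuclideanSpace ℂ ι) _ (WithLp.toLp 2 v) := by
  rw [EuclideanSpace.norm_eq]
  simp [nrm, Complex.normSq_eq_norm_sq]

lemma aux_nrm_nonneg (v : ι → ℂ) : 0 ≤ nrm v := Real.sqrt_nonneg _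

lemma aux_ip_cs (w v : ι → ℂ) : ‖ip w v‖ ≤ nrm w * nrm v := by
  rw [aux_ip_inner, aux_nrm_norm, aux_nrm_norm]
  exact norm_inner_le_norm (𝕜 := ℂ) _ _

lemma aux_ip_self (v : ι → ℂ) : ip v v = ((nrm v : ℝ) : ℂ) ^ 2 := by
  rw [aux_ip_inner, aux_nrm_norm]
  exact_mod_cast inner_self_eq_norm_sq_to_K (𝕜 := ℂ) (E := EuclideanSpace ℂ ι) (WithLp.toLp 2 v)

lemma aux_ip_smul (c : ℂ) (w v : ι → ℂ) : ip w (c • v) = c * ip w v := by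
  simp only [ip, Pi.smul_apply, smul_eq_mul, Finset.mul_sum]
  exact Finset.sum_congr rfl fun i _ => by ring

lemma aux_nrm_smul (c : ℂ) (v : ι → ℂ) : nrm (c • v) = ‖c‖ * nrm v := by
  rw [aux_nrm_norm, aux_nrm_norm]
  exact norm_smul c (WithLp.toLp 2 v)

lemma aux_ip_dot (w v : ι → ℂ) : ip w v = dotProduct (star w) v := by
  simp [ip, dotProduct]

variable [DecidableEq ι]

lemma aux_ip_adj (P : Matrix ι ι ℂ) (hP : P.IsHermitian) (w v : ι → ℂ) :
    ip w (P.mulVec v) = ip (P.mulVec w) v := by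
  rw [aux_ip_dot, aux_ip_dot, Matrix.dotProduct_mulVec, Matrix.star_mulVec, hP]

omit [DecidableEq ι] in
lemma aux_mulVec_idem (P : Matrix ι ι ℂ) (hP : P * P = P) (v : ι → ℂ) :
    P.mulVec (P.mulVec v) = P.mulVec v := by
  rw [Matrix.mulVec_mulVec, hP]

end Aux

section Main

variable {m n : ℕ} {k : ℕ}

lemma aux_snorm_le_nrm (v : Fin m × Fin n → ℂ) : snorm k v ≤ nrm v := by
  apply Real.sSup_le
  · rintro r ⟨w, hw1, -, rfl⟩
    calc ‖ip w v‖ ≤ nrm w * nrm v := aux_ip_cs w v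
      _ = nrm v := by rw [hw1, one_mul]
  · exact aux_nrm_nonneg v

lemma aux_snorm_bdd (v : Fin m × Fin n → ℂ) :
    BddAbove { r : ℝ | ∃ w : Fin m × Fin n → ℂ, nrm w = 1 ∧ SRle k w ∧
      r = ‖ip w v‖ } := by
  refine ⟨nrm v, ?_⟩
  rintro r ⟨w, hw1, -, rfl⟩
  calc ‖ip w v‖ ≤ nrm w * nrm v := aux_ip_cs w v
    _ = nrm v := by rw [hw1, one_mul]

lemma aux_snorm_nonneg (v : Fin m × Fin n → ℂ) : 0 ≤ snorm k v :=
  Real.sSup_nonneg (by rintro r ⟨w, -, -, rfl⟩; positivity)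

lemma aux_ip_proj_self (P : Matrix (Fin m × Fin n) (Fin m × Fin n) ℂ)
    (hPherm : P.IsHermitian) (hPidem : P * P = P) (x : Fin m × Fin n → ℂ) :
    ip x (P.mulVec x) = ((nrm (P.mulVec x) : ℝ) : ℂ) ^ 2 := by
  calc ip x (P.mulVec x) = ip x (P.mulVec (P.mulVec x)) := by
        rw [aux_mulVec_idem P hPidem]
    _ = ip (P.mulVec x) (P.mulVec x) := aux_ip_adj P hPherm x (P.mulVec x)
    _ = ((nrm (P.mulVec x) : ℝ) : ℂ) ^ 2 := aux_ip_self _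

lemma aux_nrmP_le (P : Matrix (Fin m × Fin n) (Fin m × Fin n) ℂ)
    (hPherm : P.IsHermitian) (hPidem : P * P = P) (v : Fin m × Fin n → ℂ) :
    nrm (P.mulVec v) ≤ nrm v := by
  set a := nrm (P.mulVec v) with ha
  have h0 : 0 ≤ a := aux_nrm_nonneg _
  rcases eq_or_lt_of_le h0 with h | h
  · rw [← h]; exact aux_nrm_nonneg v
  · have h1 : ip v (P.mulVec v) = ((a : ℝ) : ℂ) ^ 2 := aux_ip_proj_self P hPherm hPidem v
    have h2 : ‖ip v (P.mulVec v)‖ = a ^ 2 := by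
      rw [h1, norm_pow, Complex.norm_of_nonneg h.le]
    have h3 := aux_ip_cs v (P.mulVec v)
    rw [h2] at h3
    nlinarith [aux_nrm_nonneg v]

end Main

/-- If `P ∈ M_m ⊗ M_n` is an orthogonal projection, then
`‖P‖_{S(k)} = sup{ ‖v‖_{s(k)}² : v a unit vector in the range of P }`. -/
theorem Snorm_projection (m n k : ℕ)
    (P : Matrix (Fin m × Fin n) (Fin m × Fin n) ℂ)
    (hPherm : P.IsHermitian) (hPidem : P * P = P) :
    Snorm k P = sSup { r : ℝ | ∃ v : Fin m × Fin n → ℂ,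
      nrm v = 1 ∧ v ∈ Set.range P.mulVec ∧ r = snorm k v ^ 2 } := by
  set S : Set ℝ := { r : ℝ | ∃ v w : Fin m × Fin n → ℂ, nrm v = 1 ∧ nrm w = 1 ∧ SRle k v ∧
    SRle k w ∧ r = ‖ip w (P.mulVec v)‖ } with hS
  set T : Set ℝ := { r : ℝ | ∃ v : Fin m × Fin n → ℂ,
      nrm v = 1 ∧ v ∈ Set.range P.mulVec ∧ r = snorm k v ^ 2 } with hT
  have hSnn : ∀ r ∈ S, (0:ℝ) ≤ r := by rintro r ⟨v, w, -, -, -, -, rfl⟩; positivity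
  have hTnn : ∀ r ∈ T, (0:ℝ) ≤ r := by
    rintro r ⟨v, -, -, rfl⟩; positivity
  have hSbdd : BddAbove S := by
    refine ⟨1, ?_⟩
    rintro r ⟨v, w, hv1, hw1, -, -, rfl⟩
    calc ‖ip w (P.mulVec v)‖ ≤ nrm w * nrm (P.mulVec v) := aux_ip_cs _ _
      _ ≤ nrm w * nrm v := by
          exact mul_le_mul_of_nonneg_left (aux_nrmP_le P hPherm hPidem v) (aux_nrm_nonneg w)
      _ = 1 := by rw [hv1, hw1, one_mul]
  have hTbdd : BddAbove T := by
    refine ⟨1, ?_⟩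
    rintro r ⟨v, hv1, -, rfl⟩
    have h1 : snorm k v ≤ 1 := by simpa [hv1] using aux_snorm_le_nrm (k := k) v
    have h2 : 0 ≤ snorm k v := aux_snorm_nonneg v
    nlinarith
  -- key claim: for unit SR≤k vectors x, ‖Px‖² ≤ sSup T
  have C : ∀ x : Fin m × Fin n → ℂ, nrm x = 1 → SRle k x →
      nrm (P.mulVec x) ^ 2 ≤ sSup T := by
    intro x hx1 hxSR
    set a := nrm (P.mulVec x) with haeq
    have h0 : 0 ≤ a := aux_nrm_nonneg _
    rcases eq_or_lt_of_le h0 with h | h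
    · rw [← h]
      simpa using Real.sSup_nonneg hTnn
    · set u : Fin m × Fin n → ℂ := ((a : ℝ) : ℂ)⁻¹ • (P.mulVec x) with hu
      have hane : ((a : ℝ) : ℂ) ≠ 0 := by
        exact_mod_cast (ne_of_gt h)
      have hu1 : nrm u = 1 := by
        rw [hu, aux_nrm_smul, norm_inv, Complex.norm_of_nonneg h.le, ← haeq]
        field_simp
      have huR : u ∈ Set.range P.mulVec := ⟨((a : ℝ) : ℂ)⁻¹ • x, by
        rw [Matrix.mulVec_smul]⟩
      have hix : ip x u = ((a : ℝ) : ℂ) := by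
        rw [hu, aux_ip_smul, aux_ip_proj_self P hPherm hPidem x, ← haeq]
        field_simp
      have hmem : a ∈ { r : ℝ | ∃ w : Fin m × Fin n → ℂ, nrm w = 1 ∧ SRle k w ∧
          r = ‖ip w u‖ } := by
        exact ⟨x, hx1, hxSR, by rw [hix, Complex.norm_of_nonneg h.le]⟩
      have h1 : a ≤ snorm k u := le_csSup (aux_snorm_bdd u) hmem
      have h2 : snorm k u ^ 2 ∈ T := ⟨u, hu1, huR, rfl⟩
      have h3 : snorm k u ^ 2 ≤ sSup T := le_csSup hTbdd h2
      nlinarith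
  apply le_antisymm
  · -- Snorm ≤ sSup T
    apply Real.sSup_le
    · rintro r ⟨v, w, hv1, hw1, hvSR, hwSR, rfl⟩
      have e1 : ip w (P.mulVec v) = ip (P.mulVec w) (P.mulVec v) := by
        rw [← aux_mulVec_idem P hPidem v, aux_ip_adj P hPherm, aux_mulVec_idem P hPidem]
      have h1 : ‖ip w (P.mulVec v)‖ ≤ nrm (P.mulVec w) * nrm (P.mulVec v) := by
        rw [e1]; exact aux_ip_cs _ _
      have h2 := C v hv1 hvSR
      have h3 := C w hw1 hwSR
      nlinarith [aux_nrm_nonneg (P.mulVec v), aux_nrm_nonneg (P.mulVec w),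
        sq_nonneg (nrm (P.mulVec v) - nrm (P.mulVec w))]
    · exact Real.sSup_nonneg hTnn
  · -- sSup T ≤ Snorm
    apply Real.sSup_le
    · rintro r ⟨u, hu1, ⟨x, hx⟩, rfl⟩
      have hPu : P.mulVec u = u := by rw [← hx]; exact aux_mulVec_idem P hPidem x
      have hSnn' : 0 ≤ sSup S := Real.sSup_nonneg hSnn
      have key : snorm k u ≤ Real.sqrt (sSup S) := by
        apply Real.sSup_le
        · rintro s ⟨w, hw1, hwSR, rfl⟩
          have e1 : ip w u = ip (P.mulVec w) u := by
            conv_lhs => rw [← hPu]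
            rw [aux_ip_adj P hPherm]
          have h1 : ‖ip w u‖ ≤ nrm (P.mulVec w) := by
            calc ‖ip w u‖ = ‖ip (P.mulVec w) u‖ := by rw [e1]
              _ ≤ nrm (P.mulVec w) * nrm u := aux_ip_cs _ _
              _ = nrm (P.mulVec w) := by rw [hu1, mul_one]
          have e2 : nrm (P.mulVec w) ^ 2 = ‖ip w (P.mulVec w)‖ := by
            rw [aux_ip_proj_self P hPherm hPidem w, norm_pow,
              Complex.norm_of_nonneg (aux_nrm_nonneg _)]
          have hmem : nrm (P.mulVec w) ^ 2 ∈ S := ⟨w, w, hw1, hw1, hwSR, hwSR, e2⟩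
          have h2 : nrm (P.mulVec w) ^ 2 ≤ sSup S := le_csSup hSbdd hmem
          have h3 : nrm (P.mulVec w) ≤ Real.sqrt (sSup S) := by
            have := Real.sqrt_le_sqrt h2
            rwa [Real.sqrt_sq (aux_nrm_nonneg _)] at this
          exact h1.trans h3
        · exact Real.sqrt_nonneg _
      have h4 : snorm k u ^ 2 ≤ Real.sqrt (sSup S) ^ 2 :=
        pow_le_pow_left₀ (aux_snorm_nonneg u) key 2
      rwa [Real.sq_sqrt hSnn'] at h4
    · exact Real.sSup_nonneg hSnn
end
end

section
/- Let ρ_α = (1/(n² − αn))(I − αS) ∈ M_n ⊗ M_n be the Werner state with parameter α ∈ [−1,1], where S is the swap operator. Then ‖ρ_α‖_{S(1)} = (1 + |min{α,0}|)/(n(n−α)), and for 2 ≤ k ≤ n, ‖ρ_α‖_{S(k)} = (1 + |α|)/(n(n−α)). -/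
open scoped BigOperators

noncomputable section

/-- The swap operator `S(|i⟩⊗|j⟩) = |j⟩⊗|i⟩` on `ℂ^n ⊗ ℂ^n`. -/
def swapMat (n : ℕ) : Matrix (Fin n × Fin n) (Fin n × Fin n) ℂ :=
  Matrix.of fun p q => if p.1 = q.2 ∧ p.2 = q.1 then 1 else 0

/-- The Werner state `ρ_α = (1/(n² − αn))(I − αS) ∈ M_n ⊗ M_n`. -/
def werner (n : ℕ) (α : ℝ) : Matrix (Fin n × Fin n) (Fin n × Fin n) ℂ :=
  ((1 / ((n : ℝ) ^ 2 - α * n) : ℝ) : ℂ) •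
    ((1 : Matrix (Fin n × Fin n) (Fin n × Fin n) ℂ) - (α : ℂ) • swapMat n)

namespace WAux
open Complex

lemma ip_cs {ι : Type} [Fintype ι] (w v : ι → ℂ) : ‖ip w v‖ ≤ nrm w * nrm v := by
  have h := @norm_inner_le_norm ℂ (EuclideanSpace ℂ ι) _ _ _ ((WithLp.equiv 2 _).symm w) ((WithLp.equiv 2 _).symm v)
  rw [PiLp.inner_apply] at h
  simp only [RCLike.inner_apply, WithLp.equiv_symm_apply, PiLp.toLp_apply] at h
  rw [EuclideanSpace.norm_eq, EuclideanSpace.norm_eq] at h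
  simp only [WithLp.equiv_symm_apply, PiLp.toLp_apply] at h
  rw [ip, nrm, nrm]
  rw [show (‖∑ i, (starRingEnd ℂ) (w i) * v i‖) = ‖∑ i, (starRingEnd ℂ) (w i) * v i‖ from rfl]
  have e1 : ∑ i, (starRingEnd ℂ) (w i) * v i = ∑ i, v i * (starRingEnd ℂ) (w i) :=
    Finset.sum_congr rfl fun i _ => mul_comm _ _
  rw [e1]
  simp only [Complex.normSq_eq_norm_sq]
  exact h

lemma ip_self_re {ι : Type} [Fintype ι] (v : ι → ℂ) : (ip v v).re = ∑ i, Complex.normSq (v i) := by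
  rw [ip, Complex.re_sum]
  exact Finset.sum_congr rfl fun i _ => by
    rw [← Complex.normSq_eq_conj_mul_self, Complex.ofReal_re]

lemma nrm_eq {ι : Type} [Fintype ι] (v : ι → ℂ) : nrm v = Real.sqrt ((ip v v).re) := by
  rw [nrm, ip_self_re]

lemma nrm_one_iff {ι : Type} [Fintype ι] {v : ι → ℂ} (h : nrm v = 1) : (ip v v).re = 1 := by
  have h0 : 0 ≤ ∑ i, Complex.normSq (v i) :=
    Finset.sum_nonneg fun i _ => Complex.normSq_nonneg _
  rw [ip_self_re]
  have := congrArg (fun x => x ^ 2) h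
  simpa [nrm, Real.sq_sqrt h0] using this

lemma ip_conj {ι : Type} [Fintype ι] (w v : ι → ℂ) : ip v w = (starRingEnd ℂ) (ip w v) := by
  rw [ip, ip, map_sum]
  exact Finset.sum_congr rfl fun i _ => by rw [map_mul, Complex.conj_conj]; ring

lemma ip_comb {ι : Type} [Fintype ι] (x y z t : ℂ) (u u' s s' : ι → ℂ) :
    ip (fun i => x * u i + y * u' i) (fun i => z * s i + t * s' i)
      = (starRingEnd ℂ) x * z * ip u s + (starRingEnd ℂ) x * t * ip u s'
        + (starRingEnd ℂ) y * z * ip u' s + (starRingEnd ℂ) y * t * ip u' s' := by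
  simp only [ip, Finset.mul_sum, ← Finset.sum_add_distrib, map_add, map_mul]
  exact Finset.sum_congr rfl fun i _ => by ring

lemma ip_tens {m n : ℕ} (a x : Fin m → ℂ) (b y : Fin n → ℂ) :
    ip (tens a b) (tens x y) = ip a x * ip b y := by
  simp only [ip, tens, Finset.sum_mul_sum, Fintype.sum_prod_type, map_mul]
  exact Finset.sum_congr rfl fun i _ => Finset.sum_congr rfl fun j _ => by ring

lemma nrm_tens {m n : ℕ} (a : Fin m → ℂ) (b : Fin n → ℂ) :
    nrm (tens a b) = nrm a * nrm b := by
  rw [nrm, nrm, nrm, ← Real.sqrt_mul (Finset.sum_nonneg fun i _ => Complex.normSq_nonneg _)]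
  congr 1
  rw [Finset.sum_mul_sum, Fintype.sum_prod_type]
  exact Finset.sum_congr rfl fun i _ => Finset.sum_congr rfl fun j _ => by
    simp [tens, Complex.normSq_mul]

end WAux
namespace WAux
variable {n : ℕ}

/-- pointwise swap of a bipartite vector -/
def sw (v : Fin n × Fin n → ℂ) : Fin n × Fin n → ℂ := fun p => v (p.2, p.1)

lemma sum_sw (f : Fin n × Fin n → ℂ) : ∑ p : Fin n × Fin n, f (p.2, p.1) = ∑ p, f p :=
  Fintype.sum_equiv (Equiv.prodComm _ _) _ _ (fun p => rfl)

lemma ip_sw_sw (w v : Fin n × Fin n → ℂ) : ip (sw w) (sw v) = ip w v := by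
  rw [ip, ip]
  exact sum_sw (fun p => (starRingEnd ℂ) (w p) * v p)

lemma ip_sw_left (w v : Fin n × Fin n → ℂ) : ip (sw w) v = ip w (sw v) := by
  rw [ip, ip]
  exact Fintype.sum_equiv (Equiv.prodComm _ _) _ _ (fun p => rfl)

lemma nrm_sw (v : Fin n × Fin n → ℂ) : nrm (sw v) = nrm v := by
  rw [nrm_eq, nrm_eq, ip_sw_sw]

lemma sw_tens (a b : Fin n → ℂ) : sw (tens a b) = tens b a := by
  funext p; simp [sw, tens, mul_comm]

/-- symmetric part -/
def vP (v : Fin n × Fin n → ℂ) : Fin n × Fin n → ℂ := fun p => (v p + v (p.2, p.1)) / 2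
/-- antisymmetric part -/
def vM (v : Fin n × Fin n → ℂ) : Fin n × Fin n → ℂ := fun p => (v p - v (p.2, p.1)) / 2

lemma ipPP (w v : Fin n × Fin n → ℂ) : ip (vP w) (vP v) = (ip w v + ip w (sw v)) / 2 := by
  have h3 : ∑ p : Fin n × Fin n, (starRingEnd ℂ) (w (p.2, p.1)) * v p
      = ∑ p : Fin n × Fin n, (starRingEnd ℂ) (w p) * v (p.2, p.1) :=
    Fintype.sum_equiv (Equiv.prodComm _ _) _ _ (fun p => rfl)
  have h4 : ∑ p : Fin n × Fin n, (starRingEnd ℂ) (w (p.2, p.1)) * v (p.2, p.1)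
      = ∑ p : Fin n × Fin n, (starRingEnd ℂ) (w p) * v p :=
    sum_sw (fun p => (starRingEnd ℂ) (w p) * v p)
  simp only [ip, vP, sw]
  have expand : ∀ p : Fin n × Fin n,
      (starRingEnd ℂ) ((w p + w (p.2, p.1)) / 2) * ((v p + v (p.2, p.1)) / 2)
      = ((starRingEnd ℂ) (w p) * v p + (starRingEnd ℂ) (w p) * v (p.2, p.1)
        + (starRingEnd ℂ) (w (p.2, p.1)) * v p
        + (starRingEnd ℂ) (w (p.2, p.1)) * v (p.2, p.1)) / 4 := by
    intro p
    rw [map_div₀, map_add]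
    have : (starRingEnd ℂ) 2 = 2 := map_ofNat _ 2
    rw [this]; ring
  rw [Finset.sum_congr rfl (fun p _ => expand p), ← Finset.sum_div,
    Finset.sum_add_distrib, Finset.sum_add_distrib, Finset.sum_add_distrib, h3, h4]
  ring

lemma ipMM (w v : Fin n × Fin n → ℂ) : ip (vM w) (vM v) = (ip w v - ip w (sw v)) / 2 := by
  have h3 : ∑ p : Fin n × Fin n, (starRingEnd ℂ) (w (p.2, p.1)) * v p
      = ∑ p : Fin n × Fin n, (starRingEnd ℂ) (w p) * v (p.2, p.1) :=
    Fintype.sum_equiv (Equiv.prodComm _ _) _ _ (fun p => rfl)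
  have h4 : ∑ p : Fin n × Fin n, (starRingEnd ℂ) (w (p.2, p.1)) * v (p.2, p.1)
      = ∑ p : Fin n × Fin n, (starRingEnd ℂ) (w p) * v p :=
    sum_sw (fun p => (starRingEnd ℂ) (w p) * v p)
  simp only [ip, vM, sw]
  have expand : ∀ p : Fin n × Fin n,
      (starRingEnd ℂ) ((w p - w (p.2, p.1)) / 2) * ((v p - v (p.2, p.1)) / 2)
      = ((starRingEnd ℂ) (w p) * v p - (starRingEnd ℂ) (w p) * v (p.2, p.1)
        - (starRingEnd ℂ) (w (p.2, p.1)) * v p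
        + (starRingEnd ℂ) (w (p.2, p.1)) * v (p.2, p.1)) / 4 := by
    intro p
    rw [map_div₀, map_sub]
    have : (starRingEnd ℂ) 2 = 2 := map_ofNat _ 2
    rw [this]; ring
  rw [Finset.sum_congr rfl (fun p _ => expand p), ← Finset.sum_div,
    Finset.sum_add_distrib, Finset.sum_sub_distrib, Finset.sum_sub_distrib, h3, h4]
  ring

lemma key_decomp (α : ℝ) (w v : Fin n × Fin n → ℂ) :
    ip w v - (α : ℂ) * ip w (sw v)
      = ((1 - α : ℝ) : ℂ) * ip (vP w) (vP v) + ((1 + α : ℝ) : ℂ) * ip (vM w) (vM v) := by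
  rw [ipPP, ipMM]; push_cast; ring

lemma T_re (α : ℝ) (v : Fin n × Fin n → ℂ) :
    (ip v v).re - α * (ip v (sw v)).re
      = (1 - α) * (ip (vP v) (vP v)).re + (1 + α) * (ip (vM v) (vM v)).re := by
  have h := congrArg Complex.re (key_decomp α v v)
  simpa [Complex.sub_re, Complex.add_re] using h

end WAux
namespace WAux
variable {n : ℕ}

lemma nrm_sq {ι : Type} [Fintype ι] (v : ι → ℂ) : nrm v ^ 2 = (ip v v).re := by
  rw [nrm_eq, Real.sq_sqrt]
  rw [ip_self_re]
  exact Finset.sum_nonneg fun i _ => Complex.normSq_nonneg _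

/-- The master Cauchy–Schwarz-type bound. -/
lemma master {α : ℝ} (hα1 : -1 ≤ α) (hα2 : α ≤ 1) (w v : Fin n × Fin n → ℂ) :
    ‖ip w v - (α : ℂ) * ip w (sw v)‖ ≤
      Real.sqrt ((ip w w).re - α * (ip w (sw w)).re) *
        Real.sqrt ((ip v v).re - α * (ip v (sw v)).re) := by
  have h1a : (0:ℝ) ≤ 1 - α := by linarith
  have h1b : (0:ℝ) ≤ 1 + α := by linarith
  set A := nrm (vP w) with hA
  set B := nrm (vP v) with hB
  set C := nrm (vM w) with hC
  set D := nrm (vM v) with hD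
  have hA0 : 0 ≤ A := Real.sqrt_nonneg _
  have hB0 : 0 ≤ B := Real.sqrt_nonneg _
  have hC0 : 0 ≤ C := Real.sqrt_nonneg _
  have hD0 : 0 ≤ D := Real.sqrt_nonneg _
  have habs : ‖ip w v - (α:ℂ) * ip w (sw v)‖ ≤ (1-α)*(A*B) + (1+α)*(C*D) := by
    rw [key_decomp]
    refine (norm_add_le _ _).trans ?_
    rw [norm_mul, norm_mul, Complex.norm_real, Complex.norm_real, Real.norm_eq_abs, Real.norm_eq_abs,
      abs_of_nonneg h1a, abs_of_nonneg h1b]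
    have c1 : ‖ip (vP w) (vP v)‖ ≤ A * B := ip_cs _ _
    have c2 : ‖ip (vM w) (vM v)‖ ≤ C * D := ip_cs _ _
    have := norm_nonneg (ip (vP w) (vP v))
    have := norm_nonneg (ip (vM w) (vM v))
    nlinarith
  have hTw : (ip w w).re - α * (ip w (sw w)).re = (1-α)*A^2 + (1+α)*C^2 := by
    rw [T_re, hA, hC, nrm_sq, nrm_sq]
  have hTv : (ip v v).re - α * (ip v (sw v)).re = (1-α)*B^2 + (1+α)*D^2 := by
    rw [T_re, hB, hD, nrm_sq, nrm_sq]
  rw [hTw, hTv]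
  refine habs.trans ?_
  have hX : (0:ℝ) ≤ (1-α)*A^2 + (1+α)*C^2 := by positivity
  have hY : (0:ℝ) ≤ (1-α)*B^2 + (1+α)*D^2 := by positivity
  rw [← Real.sqrt_mul hX]
  rw [show ((1-α)*A^2 + (1+α)*C^2) * ((1-α)*B^2 + (1+α)*D^2)
    = ((1-α)*(A*B) + (1+α)*(C*D))^2 + (1-α)*(1+α)*(A*D - C*B)^2 by ring]
  have hL : (0:ℝ) ≤ (1-α)*(A*B) + (1+α)*(C*D) := by positivity
  calc (1-α)*(A*B) + (1+α)*(C*D) = Real.sqrt (((1-α)*(A*B) + (1+α)*(C*D))^2) := by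
        rw [Real.sqrt_sq hL]
    _ ≤ _ := by
        apply Real.sqrt_le_sqrt
        nlinarith [mul_nonneg (mul_nonneg h1a h1b) (sq_nonneg (A*D - C*B))]

lemma T_le_general {α : ℝ} {v : Fin n × Fin n → ℂ} (hv : nrm v = 1) :
    (ip v v).re - α * (ip v (sw v)).re ≤ 1 + |α| := by
  have h1 : (ip v v).re = 1 := nrm_one_iff hv
  have h2 : |(ip v (sw v)).re| ≤ 1 := by
    refine (Complex.abs_re_le_norm _).trans ?_
    have := ip_cs v (sw v)
    rwa [nrm_sw, hv, mul_one] at this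
  have h3 : -(α * (ip v (sw v)).re) ≤ |α| := by
    calc -(α * (ip v (sw v)).re) ≤ |α * (ip v (sw v)).re| := neg_le_abs _
      _ = |α| * |(ip v (sw v)).re| := abs_mul _ _
      _ ≤ |α| * 1 := by gcongr
      _ = |α| := mul_one _
  linarith

lemma T_le_prod {α : ℝ} {v : Fin n × Fin n → ℂ} (hv : nrm v = 1) (hsr : SRle 1 v) :
    (ip v v).re - α * (ip v (sw v)).re ≤ 1 + |min α 0| := by
  obtain ⟨a, b, hab⟩ := hsr
  have hv' : v = tens (a 0) (b 0) := by
    rw [hab]; funext p; simp [tens, Fin.sum_univ_one]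
  have h1 : (ip v v).re = 1 := nrm_one_iff hv
  have hsww : ip v (sw v) = (Complex.normSq (ip (a 0) (b 0)) : ℂ) := by
    rw [hv', sw_tens, ip_tens, ip_conj (a 0) (b 0), Complex.mul_conj]
  have hre : (ip v (sw v)).re = Complex.normSq (ip (a 0) (b 0)) := by
    rw [hsww, Complex.ofReal_re]
  set t := Complex.normSq (ip (a 0) (b 0)) with ht
  have ht0 : 0 ≤ t := Complex.normSq_nonneg _
  have hprod : nrm (a 0) * nrm (b 0) = 1 := by
    rw [← nrm_tens, ← hv', hv]
  have ht1 : t ≤ 1 := by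
    have habs : ‖ip (a 0) (b 0)‖ ≤ nrm (a 0) * nrm (b 0) := ip_cs _ _
    have : ‖ip (a 0) (b 0)‖ ^ 2 ≤ (nrm (a 0) * nrm (b 0)) ^ 2 := by
      refine pow_le_pow_left₀ (norm_nonneg _) habs 2
    rw [hprod, one_pow] at this
    rwa [ht, Complex.normSq_eq_norm_sq]
  rw [h1, hre]
  rcases le_or_gt 0 α with hα | hα
  · have : |min α 0| = 0 := by rw [min_eq_right hα, abs_zero]
    rw [this]
    nlinarith
  · have : |min α 0| = -α := by rw [min_eq_left hα.le, abs_of_neg hα]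
    rw [this]
    nlinarith
end WAux
namespace WAux
variable {n : ℕ}

lemma swapMat_mulVec (v : Fin n × Fin n → ℂ) : (swapMat n).mulVec v = sw v := by
  funext p
  rw [Matrix.mulVec, dotProduct]
  have key : ∀ q : Fin n × Fin n,
      swapMat n p q * v q = if q = (p.2, p.1) then v q else 0 := by
    intro q
    by_cases h : q = (p.2, p.1)
    · subst h; simp [swapMat]
    · have : ¬(p.1 = q.2 ∧ p.2 = q.1) := by
        intro ⟨h1, h2⟩
        exact h (Prod.ext h2.symm h1.symm)
      simp [swapMat, this, h]
  rw [Finset.sum_congr rfl (fun q _ => key q), Finset.sum_ite_eq' Finset.univ (p.2, p.1) v]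
  simp [sw]

lemma werner_ip (α : ℝ) (w v : Fin n × Fin n → ℂ) :
    ip w ((werner n α).mulVec v)
      = ((1 / ((n : ℝ) ^ 2 - α * n) : ℝ) : ℂ) * (ip w v - (α : ℂ) * ip w (sw v)) := by
  have hmv : (werner n α).mulVec v
      = fun p => ((1 / ((n : ℝ) ^ 2 - α * n) : ℝ) : ℂ) * (v p - (α : ℂ) * sw v p) := by
    rw [werner, Matrix.smul_mulVec, Matrix.sub_mulVec, Matrix.one_mulVec,
      Matrix.smul_mulVec, swapMat_mulVec]
    funext p
    simp [smul_eq_mul]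
  rw [hmv]
  simp only [ip, Finset.mul_sum, ← Finset.sum_sub_distrib]
  refine Finset.sum_congr rfl fun p _ => by ring

/-- basis vector -/
def ev (i : Fin n) : Fin n → ℂ := fun j => if j = i then 1 else 0

lemma ip_ev_self (i : Fin n) : ip (ev i) (ev i) = 1 := by
  simp [ip, ev, apply_ite (starRingEnd ℂ)]

lemma ip_ev_ne {i j : Fin n} (h : i ≠ j) : ip (ev i) (ev j) = 0 := by
  rw [ip]
  refine Finset.sum_eq_zero fun l _ => ?_
  simp [ev]
  intro h1 h2
  exact absurd (h1 ▸ h2) h.symm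

lemma srle_one {m k : ℕ} (a : Fin m → ℂ) (b : Fin k → ℂ) : SRle 1 (tens a b) :=
  ⟨fun _ => a, fun _ => b, by funext p; simp [tens, Fin.sum_univ_one]⟩

lemma srle_two {m m' k : ℕ} (hk : 2 ≤ k) (x : Fin m → ℂ) (y : Fin m' → ℂ)
    (x' : Fin m → ℂ) (y' : Fin m' → ℂ) :
    SRle k (fun p => x p.1 * y p.2 + x' p.1 * y' p.2) := by
  have h01 : (⟨0, by omega⟩ : Fin k) ≠ ⟨1, by omega⟩ := by
    intro h; simpa using congrArg Fin.val h
  refine ⟨fun l => if l = ⟨0, by omega⟩ then x else if l = ⟨1, by omega⟩ then x' else 0,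
          fun l => if l = ⟨0, by omega⟩ then y else if l = ⟨1, by omega⟩ then y' else 0, ?_⟩
  funext p
  have key : ∀ l : Fin k,
      (if l = (⟨0, by omega⟩ : Fin k) then x else if l = ⟨1, by omega⟩ then x' else 0) p.1 *
      (if l = (⟨0, by omega⟩ : Fin k) then y else if l = ⟨1, by omega⟩ then y' else 0) p.2
      = (if l = (⟨0, by omega⟩ : Fin k) then x p.1 * y p.2 else 0)
        + (if l = (⟨1, by omega⟩ : Fin k) then x' p.1 * y' p.2 else 0) := by
    intro l
    by_cases h0 : l = (⟨0, by omega⟩ : Fin k) <;> by_cases h1 : l = (⟨1, by omega⟩ : Fin k)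
    · exact absurd (h0.symm.trans h1) h01
    · simp [h0, h1]
    · simp [h0, h1]
    · simp [h0, h1]
  rw [show (∑ l : Fin k,
      (if l = (⟨0, by omega⟩ : Fin k) then x else if l = ⟨1, by omega⟩ then x' else 0) p.1 *
      (if l = (⟨0, by omega⟩ : Fin k) then y else if l = ⟨1, by omega⟩ then y' else 0) p.2)
      = ∑ l : Fin k, ((if l = (⟨0, by omega⟩ : Fin k) then x p.1 * y p.2 else 0)
        + (if l = (⟨1, by omega⟩ : Fin k) then x' p.1 * y' p.2 else 0)) from
    Finset.sum_congr rfl fun l _ => key l]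
  rw [Finset.sum_add_distrib, Finset.sum_ite_eq' Finset.univ, Finset.sum_ite_eq' Finset.univ]
  simp

end WAux
namespace WAux
variable {n : ℕ}

lemma nrm_ev (i : Fin n) : nrm (ev i) = 1 := by
  rw [nrm_eq, ip_ev_self, Complex.one_re, Real.sqrt_one]

lemma Snorm_eval (hn : 2 ≤ n) (α : ℝ) (hα1 : -1 ≤ α) (hα2 : α ≤ 1)
    (k : ℕ) (B : ℝ) (hB0 : 0 ≤ B)
    (hub : ∀ v : Fin n × Fin n → ℂ, nrm v = 1 → SRle k v →
      (ip v v).re - α * (ip v (sw v)).re ≤ 1 + B)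
    (hwit : ∃ v : Fin n × Fin n → ℂ, nrm v = 1 ∧ SRle k v ∧
      ip v v - (α : ℂ) * ip v (sw v) = ((1 + B : ℝ) : ℂ)) :
    Snorm k (werner n α) = (1 + B) / ((n : ℝ) * ((n : ℝ) - α)) := by
  have hn2 : (2:ℝ) ≤ (n:ℝ) := by exact_mod_cast hn
  have hden : (0:ℝ) < (n:ℝ)^2 - α * n := by nlinarith
  have hcpos : (0:ℝ) < 1 / ((n : ℝ) ^ 2 - α * n) := by positivity
  rw [Snorm]
  have hub' : ∀ r ∈ {r : ℝ | ∃ v w : Fin n × Fin n → ℂ, nrm v = 1 ∧ nrm w = 1 ∧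
      SRle k v ∧ SRle k w ∧ r = ‖ip w ((werner n α).mulVec v)‖},
      r ≤ (1 / ((n : ℝ) ^ 2 - α * n)) * (1 + B) := by
    rintro r ⟨v, w, hv, hw, hsv, hsw, rfl⟩
    rw [werner_ip, norm_mul, Complex.norm_real, Real.norm_eq_abs, abs_of_pos hcpos]
    have hm := master hα1 hα2 w v
    have bw : Real.sqrt ((ip w w).re - α * (ip w (sw w)).re) ≤ Real.sqrt (1+B) :=
      Real.sqrt_le_sqrt (hub w hw hsw)
    have bv : Real.sqrt ((ip v v).re - α * (ip v (sw v)).re) ≤ Real.sqrt (1+B) :=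
      Real.sqrt_le_sqrt (hub v hv hsv)
    have habs : ‖ip w v - (α:ℂ) * ip w (sw v)‖ ≤ 1 + B := by
      refine hm.trans ?_
      calc _ ≤ Real.sqrt (1+B) * Real.sqrt (1+B) :=
            mul_le_mul bw bv (Real.sqrt_nonneg _) (Real.sqrt_nonneg _)
        _ = 1 + B := Real.mul_self_sqrt (by linarith)
    exact mul_le_mul_of_nonneg_left habs hcpos.le
  obtain ⟨v0, hv0, hsr0, hval⟩ := hwit
  have hmem : (1 / ((n : ℝ) ^ 2 - α * n)) * (1 + B) ∈ {r : ℝ | ∃ v w : Fin n × Fin n → ℂ,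
      nrm v = 1 ∧ nrm w = 1 ∧ SRle k v ∧ SRle k w ∧
      r = ‖ip w ((werner n α).mulVec v)‖} := by
    refine ⟨v0, v0, hv0, hv0, hsr0, hsr0, ?_⟩
    rw [werner_ip, hval, norm_mul, Complex.norm_real, Complex.norm_real, Real.norm_eq_abs, Real.norm_eq_abs,
      abs_of_pos hcpos, abs_of_nonneg (by linarith : (0:ℝ) ≤ 1 + B)]
  have heq : sSup {r : ℝ | ∃ v w : Fin n × Fin n → ℂ, nrm v = 1 ∧ nrm w = 1 ∧
      SRle k v ∧ SRle k w ∧ r = ‖ip w ((werner n α).mulVec v)‖}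
      = (1 / ((n : ℝ) ^ 2 - α * n)) * (1 + B) :=
    le_antisymm (Real.sSup_le hub' (by positivity))
      (le_csSup ⟨_, hub'⟩ hmem)
  rw [heq, show (n:ℝ)^2 - α*n = (n:ℝ)*((n:ℝ)-α) from by ring,
    div_mul_eq_mul_div, one_mul]

lemma wit_two (hn : 2 ≤ n) (k : ℕ) (hk : 2 ≤ k) (α : ℝ) :
    ∃ v : Fin n × Fin n → ℂ, nrm v = 1 ∧ SRle k v ∧
      ip v v - (α : ℂ) * ip v (sw v) = ((1 + |α| : ℝ) : ℂ) := by
  have h0 : 0 < n := by omega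
  have h1 : 1 < n := by omega
  set i0 : Fin n := ⟨0, h0⟩ with hi0
  set i1 : Fin n := ⟨1, h1⟩ with hi1
  have hne : i0 ≠ i1 := by
    intro h; simpa [hi0, hi1] using congrArg Fin.val h
  set r2 : ℝ := (Real.sqrt 2)⁻¹ with hr2def
  have hr2 : r2^2 = 1/2 := by
    rw [hr2def, inv_pow, Real.sq_sqrt (by norm_num : (0:ℝ) ≤ 2)]
    norm_num
  set s : ℝ := if 0 ≤ α then 1 else -1 with hsdef
  have hs2 : s^2 = 1 := by rw [hsdef]; split <;> norm_num
  have hαs : α * s = |α| := by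
    rw [hsdef]; split_ifs with h
    · rw [abs_of_nonneg h]; ring
    · rw [abs_of_neg (lt_of_not_ge h)]; ring
  have huu : ip (tens (ev i0) (ev i1)) (tens (ev i0) (ev i1)) = 1 := by
    rw [ip_tens, ip_ev_self, ip_ev_self, one_mul]
  have huv : ip (tens (ev i0) (ev i1)) (tens (ev i1) (ev i0)) = 0 := by
    rw [ip_tens, ip_ev_ne hne, zero_mul]
  have hvu : ip (tens (ev i1) (ev i0)) (tens (ev i0) (ev i1)) = 0 := by
    rw [ip_tens, ip_ev_ne hne.symm, zero_mul]
  have hvv : ip (tens (ev i1) (ev i0)) (tens (ev i1) (ev i0)) = 1 := by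
    rw [ip_tens, ip_ev_self, ip_ev_self, one_mul]
  refine ⟨fun p => (r2 : ℂ) * tens (ev i0) (ev i1) p
    + ((-(s*r2) : ℝ) : ℂ) * tens (ev i1) (ev i0) p, ?_, ?_, ?_⟩
  · rw [nrm_eq, ip_comb, huu, huv, hvu, hvv, Complex.conj_ofReal, Complex.conj_ofReal]
    have : (r2:ℂ) * ↑r2 * 1 + ↑r2 * ↑(-(s * r2)) * 0 + ↑(-(s * r2)) * ↑r2 * 0
        + ↑(-(s * r2)) * ↑(-(s * r2)) * 1 = ((1:ℝ):ℂ) := by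
      have cs2 : ((s:ℂ))^2 = 1 := by exact_mod_cast congrArg (Complex.ofReal) hs2
      have cr2 : ((r2:ℂ))^2 = 1/2 := by rw [← Complex.ofReal_pow, hr2]; norm_num
      push_cast
      linear_combination ((r2:ℂ)^2) * cs2 + 2 * cr2
    rw [this, Complex.ofReal_re, Real.sqrt_one]
  · have h := srle_two (m := n) (m' := n) hk (fun i => (r2:ℂ) * ev i0 i) (ev i1)
      (fun i => ((-(s*r2) : ℝ) : ℂ) * ev i1 i) (ev i0)
    have heq : (fun p : Fin n × Fin n => ((r2:ℂ) * ev i0 p.1) * ev i1 p.2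
        + (((-(s*r2) : ℝ) : ℂ) * ev i1 p.1) * ev i0 p.2)
        = fun p : Fin n × Fin n => (r2 : ℂ) * tens (ev i0) (ev i1) p
          + ((-(s*r2) : ℝ) : ℂ) * tens (ev i1) (ev i0) p := by
      funext p; simp only [tens]; ring
    rw [← heq]
    exact h
  · have hsw : sw (fun p : Fin n × Fin n => (r2 : ℂ) * tens (ev i0) (ev i1) p
        + ((-(s*r2) : ℝ) : ℂ) * tens (ev i1) (ev i0) p)
        = fun p : Fin n × Fin n => (r2 : ℂ) * tens (ev i1) (ev i0) p
          + ((-(s*r2) : ℝ) : ℂ) * tens (ev i0) (ev i1) p := by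
      funext p; simp only [sw, tens]; ring
    rw [hsw, ip_comb, ip_comb, huu, huv, hvu, hvv,
      Complex.conj_ofReal, Complex.conj_ofReal]
    push_cast
    have cs2 : ((s:ℂ))^2 = 1 := by exact_mod_cast congrArg (Complex.ofReal) hs2
    have cr2 : ((r2:ℂ))^2 = 1/2 := by rw [← Complex.ofReal_pow, hr2]; norm_num
    have cαs : (α:ℂ) * s = (|α| : ℝ) := by exact_mod_cast congrArg (Complex.ofReal) hαs
    linear_combination ((r2:ℂ)^2) * cs2 + 2 * cr2 + (2*(α:ℂ)*(s:ℂ)) * cr2 + cαs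

end WAux
/-- For the Werner state `ρ_α ∈ M_n ⊗ M_n` with `α ∈ [−1,1]`:
`‖ρ_α‖_{S(1)} = (1 + |min{α,0}|)/(n(n−α))`, and for `2 ≤ k ≤ n`,
`‖ρ_α‖_{S(k)} = (1 + |α|)/(n(n−α))`. -/
theorem werner_Snorm (n : ℕ) (hn : 2 ≤ n) (α : ℝ) (hα1 : -1 ≤ α) (hα2 : α ≤ 1) :
    Snorm 1 (werner n α) = (1 + |min α 0|) / ((n : ℝ) * ((n : ℝ) - α)) ∧
    ∀ k : ℕ, 2 ≤ k → k ≤ n →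
      Snorm k (werner n α) = (1 + |α|) / ((n : ℝ) * ((n : ℝ) - α)) := by
  constructor
  · have h0 : 0 < n := by omega
    have h1 : 1 < n := by omega
    refine WAux.Snorm_eval hn α hα1 hα2 1 (|min α 0|) (abs_nonneg _)
      (fun v hv hsr => WAux.T_le_prod hv hsr) ?_
    rcases le_or_gt 0 α with hα | hα
    · have hB : |min α 0| = 0 := by rw [min_eq_right hα, abs_zero]
      refine ⟨tens (WAux.ev ⟨0,h0⟩) (WAux.ev ⟨1,h1⟩), ?_, WAux.srle_one _ _, ?_⟩
      · rw [WAux.nrm_tens, WAux.nrm_ev, WAux.nrm_ev, one_mul]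
      · have hne : (⟨0,h0⟩ : Fin n) ≠ ⟨1,h1⟩ := fun h => by simpa using congrArg Fin.val h
        rw [WAux.sw_tens, WAux.ip_tens, WAux.ip_tens, WAux.ip_ev_self, WAux.ip_ev_self,
          WAux.ip_ev_ne hne, hB]
        norm_num
    · have hB : |min α 0| = -α := by rw [min_eq_left hα.le, abs_of_neg hα]
      refine ⟨tens (WAux.ev ⟨0,h0⟩) (WAux.ev ⟨0,h0⟩), ?_, WAux.srle_one _ _, ?_⟩
      · rw [WAux.nrm_tens, WAux.nrm_ev, one_mul]
      · rw [WAux.sw_tens, WAux.ip_tens, WAux.ip_ev_self, hB]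
        push_cast; ring
  · intro k hk _
    exact WAux.Snorm_eval hn α hα1 hα2 k (|α|) (abs_nonneg _)
      (fun v hv _ => WAux.T_le_general hv) (WAux.wit_two hn k hk α)
end
end

section
/- The partial transpose of the Werner state ρ_α ∈ M_n ⊗ M_n is k-block positive if and only if α ≤ 1/k. -/
open scoped BigOperators

noncomputable section

/-- The partial transpose (on the second tensor factor):
`X^Γ((i,j),(i',j')) = X((i,j'),(i',j))`. -/
def ptranspose {m n : ℕ} (X : Matrix (Fin m × Fin n) (Fin m × Fin n) ℂ) :
    Matrix (Fin m × Fin n) (Fin m × Fin n) ℂ :=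
  Matrix.of fun p q => X (p.1, q.2) (q.1, p.2)

/-! ### Auxiliary lemmas -/

lemma pt_entry (n : ℕ) (α : ℝ) (p q : Fin n × Fin n) :
    ptranspose (werner n α) p q = ((1 / ((n:ℝ)^2 - α*n) : ℝ) : ℂ) *
      ((if p = q then 1 else 0) -
        (α:ℂ) * ((if p.1 = p.2 then (1:ℂ) else 0) * (if q.1 = q.2 then (1:ℂ) else 0))) := by
  have h1 : ((p.1, q.2) = ((q.1, p.2) : Fin n × Fin n)) ↔ p = q := by
    constructor
    · rintro h; rw [Prod.ext_iff] at h ⊢; exact ⟨h.1, h.2.symm⟩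
    · rintro rfl; rfl
  have h2 : ((if p.1 = p.2 then (1:ℂ) else 0) * (if q.1 = q.2 then (1:ℂ) else 0))
      = if p.1 = p.2 ∧ q.2 = q.1 then (1:ℂ) else 0 := by
    by_cases hp : p.1 = p.2 <;> by_cases hq : q.1 = q.2 <;>
      simp [hp, hq, eq_comm]
  simp only [ptranspose, werner, Matrix.of_apply, Matrix.smul_apply, Matrix.sub_apply,
    Matrix.one_apply, swapMat, h2, smul_eq_mul]
  rw [if_congr h1 rfl rfl]

lemma diag_sum (n : ℕ) (f : Fin n × Fin n → ℂ) :
    (∑ q : Fin n × Fin n, (if q.1 = q.2 then (1:ℂ) else 0) * f q) = ∑ i, f (i, i) := by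
  rw [Fintype.sum_prod_type]
  apply Finset.sum_congr rfl
  intro i _
  rw [Finset.sum_eq_single i] <;> simp +contextual [eq_comm]

lemma quad (n : ℕ) (α : ℝ) (v : Fin n × Fin n → ℂ) :
    (ip v ((ptranspose (werner n α)).mulVec v)).re
      = (1 / ((n:ℝ)^2 - α*n)) *
        ((∑ p, Complex.normSq (v p)) - α * Complex.normSq (∑ i, v (i, i))) := by
  set c : ℝ := 1 / ((n:ℝ)^2 - α*n) with hc
  have hmv : ∀ p, (ptranspose (werner n α)).mulVec v p
      = (c:ℂ) * (v p - (α:ℂ) * ((if p.1 = p.2 then (1:ℂ) else 0) * ∑ i, v (i, i))) := by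
    intro p
    unfold Matrix.mulVec dotProduct
    simp only [pt_entry]
    have e1 : (∑ q : Fin n × Fin n, (if p = q then (1:ℂ) else 0) * v q) = v p := by
      rw [Finset.sum_eq_single p] <;> simp +contextual [eq_comm]
    have step : (∑ q : Fin n × Fin n, ((c:ℂ) *
        ((if p = q then 1 else 0) -
          (α:ℂ) * ((if p.1 = p.2 then (1:ℂ) else 0) * (if q.1 = q.2 then (1:ℂ) else 0))) * v q))
        = (c:ℂ) * (∑ q : Fin n × Fin n, (if p = q then (1:ℂ) else 0) * v q)
          - ((c:ℂ) * (α:ℂ) * (if p.1 = p.2 then (1:ℂ) else 0)) *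
            (∑ q : Fin n × Fin n, (if q.1 = q.2 then (1:ℂ) else 0) * v q) := by
      rw [Finset.mul_sum, Finset.mul_sum, ← Finset.sum_sub_distrib]
      apply Finset.sum_congr rfl
      intro q _
      ring
    rw [step, e1, diag_sum n v]
    ring
  unfold ip
  simp only [hmv]
  have hdiag : (∑ p : Fin n × Fin n, (if p.1 = p.2 then (1:ℂ) else 0) * (starRingEnd ℂ) (v p))
      = (starRingEnd ℂ) (∑ i, v (i, i)) := by
    rw [diag_sum n (fun p => (starRingEnd ℂ) (v p)), map_sum]
  have step2 : (∑ p, (starRingEnd ℂ) (v p) *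
      ((c:ℂ) * (v p - (α:ℂ) * ((if p.1 = p.2 then (1:ℂ) else 0) * ∑ i, v (i, i)))))
      = (c:ℂ) * (∑ p, (starRingEnd ℂ) (v p) * v p)
        - ((c:ℂ) * (α:ℂ) * (∑ i, v (i, i))) *
          (∑ p : Fin n × Fin n, (if p.1 = p.2 then (1:ℂ) else 0) * (starRingEnd ℂ) (v p)) := by
    rw [Finset.mul_sum, Finset.mul_sum, ← Finset.sum_sub_distrib]
    apply Finset.sum_congr rfl
    intro p _
    ring
  rw [step2, hdiag]
  have h1 : (∑ p, (starRingEnd ℂ) (v p) * v p) = ((∑ p, Complex.normSq (v p) : ℝ) : ℂ) := by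
    push_cast
    apply Finset.sum_congr rfl
    intro p _
    rw [Complex.normSq_eq_conj_mul_self]
  rw [h1]
  have final : (c:ℂ) * ((∑ p, Complex.normSq (v p) : ℝ) : ℂ)
      - ((c:ℂ) * (α:ℂ) * (∑ i, v (i, i))) * (starRingEnd ℂ) (∑ i, v (i, i))
      = ((c * ((∑ p, Complex.normSq (v p)) - α * Complex.normSq (∑ i, v (i, i))) : ℝ) : ℂ) := by
    have hmc : ((Complex.normSq (∑ i, v (i, i)) : ℝ) : ℂ)
        = (∑ i, v (i, i)) * (starRingEnd ℂ) (∑ i, v (i, i)) := (Complex.mul_conj _).symm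
    push_cast
    rw [hmc]
    ring
  rw [final, Complex.ofReal_re]

def WF (k : ℕ) : WellFoundedLT (Fin k) := inferInstanceAs (WellFoundedLT (Fin k))

def GS {n k : ℕ} (a : Fin k → Fin n → ℂ) : Fin k → EuclideanSpace ℂ (Fin n) :=
  @InnerProductSpace.gramSchmidt ℂ (EuclideanSpace ℂ (Fin n)) _ _ _ (Fin k) _ _ (WF k)
    (fun l => ((WithLp.equiv 2 (Fin n → ℂ)).symm (a l)))

lemma GS_orth {n k : ℕ} (a : Fin k → Fin n → ℂ) {i j : Fin k} (h : i ≠ j) :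
    (inner ℂ (GS a i) (GS a j) : ℂ) = 0 :=
  @InnerProductSpace.gramSchmidt_orthogonal ℂ _ _ _ _ (Fin k) _ _ (WF k) _ i j h

lemma GS_coeff {n k : ℕ} (a : Fin k → Fin n → ℂ) (l : Fin k) :
    ∃ c : Fin k → ℂ, ∑ j, c j • GS a j = (WithLp.equiv 2 (Fin n → ℂ)).symm (a l) := by
  apply (Submodule.mem_span_range_iff_exists_fun ℂ).mp
  rw [GS, @InnerProductSpace.span_gramSchmidt ℂ _ _ _ _ (Fin k) _ _ (WF k)]
  exact Submodule.subset_span ⟨l, rfl⟩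

lemma sumApply {n k : ℕ} (g : Fin k → EuclideanSpace ℂ (Fin n)) (c : Fin k → ℂ) (i : Fin n) :
    (∑ j, c j • g j) i = ∑ j, c j * g j i := by
  induction (Finset.univ : Finset (Fin k)) using Finset.induction with
  | empty => simp [PiLp.zero_apply]
  | insert a s h ih =>
      rw [Finset.sum_insert h, Finset.sum_insert h, PiLp.add_apply, PiLp.smul_apply, ih,
        smul_eq_mul]

lemma normE {n : ℕ} (x : EuclideanSpace ℂ (Fin n)) :
    ‖x‖ = Real.sqrt (∑ i, Complex.normSq (x i)) := by
  rw [EuclideanSpace.norm_eq]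
  congr 1
  apply Finset.sum_congr rfl
  intro i _
  exact Complex.sq_norm _

lemma normE_sq {n : ℕ} (x : EuclideanSpace ℂ (Fin n)) :
    ‖x‖ ^ 2 = ∑ i, Complex.normSq (x i) := by
  rw [normE, Real.sq_sqrt]
  exact Finset.sum_nonneg fun i _ => Complex.normSq_nonneg _

lemma cs {n : ℕ} (x y : EuclideanSpace ℂ (Fin n)) :
    ‖∑ i, x i * y i‖ ≤ ‖x‖ * ‖y‖ := by
  set xs : EuclideanSpace ℂ (Fin n) :=
    (WithLp.equiv 2 (Fin n → ℂ)).symm (fun i => (starRingEnd ℂ) (x i)) with hxs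
  have h1 : (inner ℂ xs y : ℂ) = ∑ i, x i * y i := by
    rw [PiLp.inner_apply]
    apply Finset.sum_congr rfl
    intro i _
    simp [hxs, mul_comm]
  have h2 : ‖xs‖ = ‖x‖ := by
    rw [normE, normE]
    congr 1
    apply Finset.sum_congr rfl
    intro i _
    simp [hxs]
  calc ‖∑ i, x i * y i‖ = ‖(inner ℂ xs y : ℂ)‖ := by
        rw [h1]
    _ ≤ ‖xs‖ * ‖y‖ := norm_inner_le_norm xs y
    _ = ‖x‖ * ‖y‖ := by rw [h2]

lemma pyth {n k : ℕ} (g : Fin k → EuclideanSpace ℂ (Fin n))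
    (horth : ∀ i j, i ≠ j → (inner ℂ (g i) (g j) : ℂ) = 0) (c : Fin k → ℂ) :
    ‖∑ j, c j • g j‖ ^ 2 = ∑ j, Complex.normSq (c j) * ‖g j‖ ^ 2 := by
  have h1 : (inner ℂ (∑ j, c j • g j) (∑ j, c j • g j) : ℂ)
      = ∑ j, (starRingEnd ℂ) (c j) * (c j * (inner ℂ (g j) (g j) : ℂ)) := by
    rw [sum_inner]
    apply Finset.sum_congr rfl
    intro j _
    rw [inner_smul_left, inner_sum]
    congr 1
    rw [Finset.sum_eq_single j]
    · rw [inner_smul_right]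
    · intro j' _ hne
      rw [inner_smul_right, horth j j' (fun h => hne h.symm), mul_zero]
    · intro h; exact absurd (Finset.mem_univ j) h
  calc ‖∑ j, c j • g j‖ ^ 2
      = (inner ℂ (∑ j, c j • g j) (∑ j, c j • g j) : ℂ).re := by
        simpa using (inner_self_eq_norm_sq (𝕜 := ℂ) (∑ j, c j • g j)).symm
    _ = ∑ j, ((starRingEnd ℂ) (c j) * (c j * (inner ℂ (g j) (g j) : ℂ))).re := by
        rw [h1, Complex.re_sum]
    _ = ∑ j, Complex.normSq (c j) * ‖g j‖ ^ 2 := by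
        apply Finset.sum_congr rfl
        intro j _
        rw [← mul_assoc, ← Complex.normSq_eq_conj_mul_self, Complex.re_ofReal_mul]
        congr 1
        simpa using inner_self_eq_norm_sq (𝕜 := ℂ) (g j)

lemma keyA {n k : ℕ} (v : Fin n × Fin n → ℂ) (h : SRle k v) :
    Complex.normSq (∑ i, v (i, i)) ≤ k * ∑ p, Complex.normSq (v p) := by
  obtain ⟨a, b, hv⟩ := h
  subst hv
  set g : Fin k → EuclideanSpace ℂ (Fin n) := GS a with hg
  choose c hc using fun l => GS_coeff a l
  set B : Fin k → Fin n → ℂ := fun j i2 => ∑ l, c l j * b l i2 with hB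
  have ha : ∀ l i, a l i = ∑ j, c l j * g j i := by
    intro l i
    have := congrArg (fun x : EuclideanSpace ℂ (Fin n) => x i) (hc l)
    simp only at this
    rw [sumApply] at this
    rw [hg, this]
    rfl
  have hv2 : ∀ p : Fin n × Fin n, (∑ l, a l p.1 * b l p.2) = ∑ j, g j p.1 * B j p.2 := by
    intro p
    simp only [ha, hB, Finset.sum_mul, Finset.mul_sum]
    rw [Finset.sum_comm]
    apply Finset.sum_congr rfl
    intro j _
    apply Finset.sum_congr rfl
    intro l _
    ring
  set Nb : Fin k → ℝ := fun j => ∑ i, Complex.normSq (B j i) with hNb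
  have hNbnn : ∀ j, 0 ≤ Nb j := fun j => Finset.sum_nonneg fun i _ => Complex.normSq_nonneg _
  have habs : ‖∑ i, (∑ l, a l (i,i).1 * b l (i,i).2)‖
      ≤ ∑ j, ‖g j‖ * Real.sqrt (Nb j) := by
    have e : (∑ i, (∑ l, a l (i,i).1 * b l (i,i).2)) = ∑ j, ∑ i, g j i * B j i := by
      rw [Finset.sum_congr rfl (fun i _ => hv2 (i, i))]
      exact Finset.sum_comm
    rw [e]
    refine le_trans (norm_sum_le _ _) (Finset.sum_le_sum fun j _ => ?_)
    have := cs (g j) ((WithLp.equiv 2 (Fin n → ℂ)).symm (B j))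
    have hn : ‖((WithLp.equiv 2 (Fin n → ℂ)).symm (B j) : EuclideanSpace ℂ (Fin n))‖
        = Real.sqrt (Nb j) := by
      rw [normE]
      congr 1
    exact le_of_le_of_eq (by exact this) (by rw [hn])
  have hnorm : (∑ p : Fin n × Fin n, Complex.normSq (∑ l, a l p.1 * b l p.2))
      = ∑ j, ‖g j‖ ^ 2 * Nb j := by
    have e1 : (∑ p : Fin n × Fin n, Complex.normSq (∑ l, a l p.1 * b l p.2))
        = ∑ i2, ∑ i1, Complex.normSq (∑ j, B j i2 * g j i1) := by
      rw [Fintype.sum_prod_type]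
      rw [Finset.sum_comm]
      apply Finset.sum_congr rfl
      intro i2 _
      apply Finset.sum_congr rfl
      intro i1 _
      rw [hv2 (i1, i2)]
      congr 1
      apply Finset.sum_congr rfl
      intro j _
      ring
    rw [e1]
    have e2 : ∀ i2 : Fin n, (∑ i1, Complex.normSq (∑ j, B j i2 * g j i1))
        = ∑ j, Complex.normSq (B j i2) * ‖g j‖ ^ 2 := by
      intro i2
      have := pyth g (fun i j h => GS_orth a h) (fun j => B j i2)
      rw [← this, normE_sq]
      apply Finset.sum_congr rfl
      intro i1 _
      congr 1
      rw [sumApply]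
    rw [Finset.sum_congr rfl (fun i2 _ => e2 i2), Finset.sum_comm]
    apply Finset.sum_congr rfl
    intro j _
    rw [hNb, Finset.mul_sum]
    exact Finset.sum_congr rfl fun i _ => mul_comm _ _
  have hfinal : Complex.normSq (∑ i, (∑ l, a l (i,i).1 * b l (i,i).2))
      ≤ k * ∑ j, ‖g j‖ ^ 2 * Nb j := by
    rw [← Complex.sq_norm]
    calc ‖∑ i, (∑ l, a l (i,i).1 * b l (i,i).2)‖ ^ 2
        ≤ (∑ j, ‖g j‖ * Real.sqrt (Nb j)) ^ 2 := by
          apply pow_le_pow_left₀ (norm_nonneg _) habs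
      _ ≤ (Finset.univ : Finset (Fin k)).card * ∑ j, (‖g j‖ * Real.sqrt (Nb j)) ^ 2 :=
          sq_sum_le_card_mul_sum_sq
      _ = k * ∑ j, ‖g j‖ ^ 2 * Nb j := by
          rw [Finset.card_univ, Fintype.card_fin]
          congr 1
          apply Finset.sum_congr rfl
          intro j _
          rw [mul_pow, Real.sq_sqrt (hNbnn j)]
  rw [hnorm]
  exact hfinal

lemma count_sum {M : Type} [AddCommMonoid M] (n k : ℕ) (hkn : k ≤ n) (y : M) :
    (∑ i : Fin n, if (i : ℕ) < k then y else 0) = k • y := by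
  rw [Fin.sum_univ_eq_sum_range (fun i => if i < k then y else 0) n]
  have h1 : (∑ i ∈ Finset.range k, if i < k then y else 0)
      = ∑ i ∈ Finset.range n, if i < k then y else 0 := by
    apply Finset.sum_subset (Finset.range_subset_range.mpr hkn)
    intro i _ hik
    rw [Finset.mem_range, not_lt] at hik
    rw [if_neg (Nat.not_lt.mpr hik)]
  rw [← h1]
  have h2 : (∑ i ∈ Finset.range k, if i < k then y else 0) = ∑ _i ∈ Finset.range k, y := by
    apply Finset.sum_congr rfl
    intro i hi
    rw [Finset.mem_range] at hi
    rw [if_pos hi]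
  rw [h2, Finset.sum_const, Finset.card_range]

/-- The partial transpose of the Werner state `ρ_α ∈ M_n ⊗ M_n` is
`k`-block positive if and only if `α ≤ 1/k`. -/
theorem werner_ptranspose_kBlockPos_iff (n k : ℕ) (hn : 2 ≤ n) (hk1 : 1 ≤ k) (hkn : k ≤ n)
    (α : ℝ) (hα1 : -1 ≤ α) (hα2 : α ≤ 1) :
    kBlockPos k (ptranspose (werner n α)) ↔ α ≤ 1 / (k : ℝ) := by
  have hk0 : (0:ℝ) < k := by exact_mod_cast hk1
  have hn2 : (2:ℝ) ≤ n := by exact_mod_cast hn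
  have hcpos : 0 < (n:ℝ)^2 - α * n := by nlinarith
  constructor
  · intro hbp
    set x : ℝ := 1 / Real.sqrt k with hx
    have hsk : (0:ℝ) < Real.sqrt k := Real.sqrt_pos.mpr hk0
    have hmss : Real.sqrt k * Real.sqrt k = k := Real.mul_self_sqrt hk0.le
    have hx2 : x ^ 2 = 1 / k := by
      rw [hx, div_pow, one_pow, Real.sq_sqrt hk0.le]
    set ce : Fin k → Fin n := Fin.castLE hkn with hce
    set w : Fin n × Fin n → ℂ :=
      fun p => ∑ l, (if p.1 = ce l then (x:ℂ) else 0) * (if p.2 = ce l then 1 else 0) with hwdef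
    have hSR : SRle k w :=
      ⟨fun l i => if i = ce l then (x:ℂ) else 0, fun l i => if i = ce l then 1 else 0, hwdef⟩
    have hcel : ∀ l : Fin k, ((ce l : Fin n) : ℕ) = (l : ℕ) := fun l => rfl
    have hw : ∀ p : Fin n × Fin n, w p = if p.1 = p.2 ∧ ((p.1:ℕ) < k) then (x:ℂ) else 0 := by
      intro p
      by_cases h : p.1 = p.2 ∧ ((p.1:ℕ) < k)
      · rw [if_pos h]
        simp only [hwdef]
        have hl0 : ce ⟨(p.1:ℕ), h.2⟩ = p.1 := by
          apply Fin.ext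
          rfl
        rw [Finset.sum_eq_single (⟨(p.1:ℕ), h.2⟩ : Fin k)]
        · have h2 : p.2 = ce ⟨(p.1:ℕ), h.2⟩ := by rw [hl0, h.1]
          rw [if_pos hl0.symm, if_pos h2, mul_one]
        · intro l _ hne
          by_cases h1 : p.1 = ce l
          · exfalso
            apply hne
            apply Fin.ext
            have : ((ce l : Fin n) : ℕ) = (p.1 : ℕ) := by rw [← h1]
            rw [← hcel l, this]
          · rw [if_neg h1, zero_mul]
        · intro hmem; exact absurd (Finset.mem_univ _) hmem
      · rw [if_neg h]
        simp only [hwdef]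
        apply Finset.sum_eq_zero
        intro l _
        by_cases h1 : p.1 = ce l
        · by_cases h2 : p.2 = ce l
          · exfalso
            apply h
            constructor
            · rw [h1, h2]
            · have : (p.1 : ℕ) = (l : ℕ) := by rw [h1, hcel l]
              rw [this]; exact l.isLt
          · rw [if_neg h2, mul_zero]
        · rw [if_neg h1, zero_mul]
      -- end hw
    have inner1 : ∀ i1 : Fin n,
        (∑ i2, Complex.normSq (if i1 = i2 ∧ ((i1:ℕ) < k) then (x:ℂ) else 0))
          = if (i1:ℕ) < k then x^2 else 0 := by
      intro i1
      by_cases hik : (i1:ℕ) < k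
      · rw [if_pos hik, Finset.sum_eq_single i1]
        · rw [if_pos ⟨rfl, hik⟩, Complex.normSq_ofReal, sq]
        · intro i2 _ hne
          rw [if_neg (fun hcon => hne hcon.1.symm)]
          simp
        · intro hmem; exact absurd (Finset.mem_univ _) hmem
      · rw [if_neg hik]
        apply Finset.sum_eq_zero
        intro i2 _
        rw [if_neg (fun hcon => hik hcon.2)]
        simp
    have hNw : (∑ p, Complex.normSq (w p)) = 1 := by
      calc (∑ p, Complex.normSq (w p))
          = ∑ i1 : Fin n, ∑ i2 : Fin n,
              Complex.normSq (if i1 = i2 ∧ ((i1:ℕ) < k) then (x:ℂ) else 0) := by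
            rw [Fintype.sum_prod_type]
            apply Finset.sum_congr rfl
            intro i1 _
            apply Finset.sum_congr rfl
            intro i2 _
            rw [hw (i1, i2)]
        _ = ∑ i1 : Fin n, if ((i1:ℕ) < k) then x^2 else 0 :=
            Finset.sum_congr rfl fun i1 _ => inner1 i1
        _ = k • (x^2) := count_sum n k hkn (x^2)
        _ = 1 := by rw [nsmul_eq_mul, hx2]; field_simp
    have hnrm : nrm w = 1 := by rw [nrm, hNw, Real.sqrt_one]
    have hkx : (k:ℝ) * x = Real.sqrt k := by
      rw [hx, mul_one_div, div_eq_iff hsk.ne']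
      exact hmss.symm
    have ht : (∑ i, w (i, i)) = (((k:ℝ) * x : ℝ) : ℂ) := by
      calc (∑ i, w (i, i)) = ∑ i : Fin n, if ((i:ℕ) < k) then ((x:ℝ):ℂ) else 0 := by
            apply Finset.sum_congr rfl
            intro i _
            rw [hw (i, i)]
            simp
        _ = k • ((x:ℝ):ℂ) := count_sum n k hkn _
        _ = (((k:ℝ) * x : ℝ) : ℂ) := by rw [nsmul_eq_mul]; push_cast; ring
    have hnst : Complex.normSq (∑ i, w (i, i)) = k := by
      rw [ht, Complex.normSq_ofReal, hkx, hmss]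
    have h0 := hbp w hnrm hSR
    rw [quad, hNw, hnst] at h0
    have hfac : 0 ≤ 1 - α * k := by
      by_contra hneg
      push_neg at hneg
      nlinarith [one_div_pos.mpr hcpos]
    rw [le_div_iff₀ hk0]
    linarith
  · intro hα v hnv hsr
    rw [quad]
    apply mul_nonneg (le_of_lt (one_div_pos.mpr hcpos))
    have hS0 : 0 ≤ ∑ p, Complex.normSq (v p) :=
      Finset.sum_nonneg fun p _ => Complex.normSq_nonneg _
    have hN1 : (∑ p, Complex.normSq (v p)) = 1 := by
      rw [nrm] at hnv
      nlinarith [Real.sq_sqrt hS0, hnv]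
    rw [hN1]
    have hkey := keyA v hsr
    rw [hN1, mul_one] at hkey
    rcases le_or_gt α 0 with hα0 | hα0
    · have : α * Complex.normSq (∑ i, v (i, i)) ≤ 0 :=
        mul_nonpos_of_nonpos_of_nonneg hα0 (Complex.normSq_nonneg _)
      linarith
    · have h1 : α * Complex.normSq (∑ i, v (i, i)) ≤ α * k :=
        mul_le_mul_of_nonneg_left hkey hα0.le
      have h2 : α * k ≤ (1/(k:ℝ)) * k := mul_le_mul_of_nonneg_right hα hk0.le
      have h3 : (1/(k:ℝ)) * k = 1 := by field_simp
      linarith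
end
end
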